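/- arXiv:2206.14836 — 9 statements merged into one kernel-verified Lean document; each statement's English description precedes it below -/
import Mathlib

section
/- (Desnanot–Jacobi identity) Let B be an n×n matrix over a commutative ring, and let i₁ < i₂ be row indices and j₁ < j₂ be column indices in [n]. Then B_{[n]∖{i₁,i₂},[n]∖{j₁,j₂}}·det(B) = B_{i₁,j₁}·B_{i₂,j₂} − B_{i₁,j₂}·B_{i₂,j₁}, where B_{i,j} denotes the minor obtained by deleting row i and column j, and B_{I,J} denotes the minor with rows indexed by I and columns indexed by J. -/
open Matrix


lemma det_updateColumn_single {R : Type*} [CommRing R] {n : ℕ}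
    (M : Matrix (Fin (n+1)) (Fin (n+1)) R) (i j : Fin (n+1)) (c : R) :
    (M.updateCol j (Pi.single i c)).det
      = (-1) ^ (i + j : ℕ) * c * (M.submatrix i.succAbove j.succAbove).det := by
  rw [det_succ_column _ j, Fintype.sum_eq_single i (fun k hk => ?_)]
  · simp
  · simp [Pi.single_eq_of_ne hk]


lemma det_one_updateColumn_pair {R : Type*} [CommRing R] {m : ℕ} (j₁ j₂ : Fin m)
    (h : j₁ ≠ j₂) (u v : Fin m → R) :
    (((1 : Matrix (Fin m) (Fin m) R).updateCol j₁ u).updateCol j₂ v).det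
      = u j₁ * v j₂ - u j₂ * v j₁ := by
  classical
  set N := ((1 : Matrix (Fin m) (Fin m) R).updateCol j₁ u).updateCol j₂ v with hN
  have hNapp : ∀ a b, N a b =
      if b = j₂ then v a else if b = j₁ then u a else if a = b then 1 else 0 := by
    intro a b
    simp [hN, updateCol_apply, one_apply]
  have hone_ne : (1 : Equiv.Perm (Fin m)) ≠ Equiv.swap j₁ j₂ := by
    intro he
    have := congrArg (fun e => e j₁) he
    simp at this
    exact h this
  rw [det_apply']
  rw [← Finset.sum_subset
      (Finset.subset_univ ({1, Equiv.swap j₁ j₂} : Finset (Equiv.Perm (Fin m))))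
      (fun σ _ hσ => ?_)]
  · rw [Finset.sum_pair hone_ne]
    have hp1 : (∏ c, N ((1 : Equiv.Perm (Fin m)) c) c) = u j₁ * v j₂ := by
      rw [← Finset.prod_subset (Finset.subset_univ ({j₁, j₂} : Finset (Fin m)))
        (fun c _ hc => ?_)]
      · rw [Finset.prod_pair h]
        rw [hNapp, hNapp]
        simp [h, Ne.symm h]
      · simp only [Finset.mem_insert, Finset.mem_singleton, not_or] at hc
        rw [hNapp]
        simp [hc.1, hc.2]
    have hp2 : (∏ c, N (Equiv.swap j₁ j₂ c) c) = u j₂ * v j₁ := by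
      rw [← Finset.prod_subset (Finset.subset_univ ({j₁, j₂} : Finset (Fin m)))
        (fun c _ hc => ?_)]
      · rw [Finset.prod_pair h]
        rw [Equiv.swap_apply_left, Equiv.swap_apply_right, hNapp, hNapp]
        simp [h, Ne.symm h]
      · simp only [Finset.mem_insert, Finset.mem_singleton, not_or] at hc
        rw [Equiv.swap_apply_of_ne_of_ne hc.1 hc.2, hNapp]
        simp [hc.1, hc.2]
    rw [hp1, hp2]
    simp [Equiv.Perm.sign_swap h]
    ring
  · simp only [Finset.mem_insert, Finset.mem_singleton, not_or] at hσ
    obtain ⟨c, hc1, hc2, hc3⟩ : ∃ c, c ≠ j₁ ∧ c ≠ j₂ ∧ σ c ≠ c := by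
      by_contra hcon
      push_neg at hcon
      have hfix : ∀ c, c ≠ j₁ → c ≠ j₂ → σ c = c := hcon
      have hout : ∀ x, σ x ≠ x → x = j₁ ∨ x = j₂ := by
        intro x hx
        by_contra hx'
        push_neg at hx'
        exact hx (hfix x hx'.1 hx'.2)
      have h1 : σ j₁ = j₁ ∨ σ j₁ = j₂ := by
        by_cases hj : σ j₁ = j₁
        · exact Or.inl hj
        · right
          by_contra hne
          have hx1 : σ j₁ ≠ j₁ := hj
          have : σ (σ j₁) = σ j₁ := hfix _ hx1 hne
          exact hj (σ.injective this)
      rcases h1 with h1 | h1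
      · apply hσ.1
        ext x
        by_cases hx1 : x = j₁
        · simp [hx1, h1]
        · by_cases hx2 : x = j₂
          · subst hx2
            by_cases hy : σ x = x
            · simp only [Equiv.Perm.coe_one, id_eq]
              exact congrArg Fin.val hy
            · exfalso
              have hyne1 : σ x ≠ j₁ := by
                intro hcontr
                exact h (σ.injective (hcontr.trans h1.symm)).symm
              have : σ (σ x) = σ x := hfix _ hyne1 hy
              exact hy (σ.injective this)
          · simp only [Equiv.Perm.coe_one, id_eq]
            exact congrArg Fin.val (hfix x hx1 hx2)
      · apply hσ.2
        have h2 : σ j₂ = j₁ := by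
          have hyne2 : σ j₂ ≠ j₂ := by
            intro hcontr
            exact h (σ.injective (h1.trans hcontr.symm))
          by_contra hne
          have : σ (σ j₂) = σ j₂ := hfix _ hne hyne2
          exact hyne2 (σ.injective this)
        ext x
        by_cases hx1 : x = j₁
        · simp [hx1, h1]
        · by_cases hx2 : x = j₂
          · simp [hx2, h2]
          · simp [hfix x hx1 hx2, Equiv.swap_apply_of_ne_of_ne hx1 hx2]
    apply mul_eq_zero_of_right
    apply Finset.prod_eq_zero (Finset.mem_univ c)
    rw [hNapp]
    simp [hc1, hc2, hc3]


lemma succAbove_mk_of_lt {n : ℕ} (i₁ i₂ : Fin (n+2)) (hi : i₁ < i₂) (h : i₁.1 < n+1) :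
    i₂.succAbove ⟨i₁.1, h⟩ = i₁ := by
  rw [Fin.succAbove_of_castSucc_lt]
  · exact Fin.ext rfl
  · rw [Fin.lt_def]
    exact Fin.lt_def.mp hi

lemma submatrix_updateColumn_of_lt {α : Type*} {n : ℕ} (M : Matrix (Fin (n+2)) (Fin (n+2)) α)
    (r : Fin (n+1) → Fin (n+2)) (j₁ j₂ : Fin (n+2)) (hj : j₁ < j₂) (h : j₁.1 < n+1)
    (u : Fin (n+2) → α) :
    (M.updateCol j₁ u).submatrix r j₂.succAbove
      = (M.submatrix r j₂.succAbove).updateCol ⟨j₁.1, h⟩ (fun k => u (r k)) := by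
  have hkey : j₂.succAbove ⟨j₁.1, h⟩ = j₁ := succAbove_mk_of_lt j₁ j₂ hj h
  ext a b
  simp only [submatrix_apply, updateCol_apply]
  by_cases hb : b = ⟨j₁.1, h⟩
  · subst hb
    simp [hkey]
  · rw [if_neg hb, if_neg]
    intro hcon
    exact hb (Fin.succAbove_right_injective (hcon.trans hkey.symm))

lemma desnanot_jacobi_aux {R : Type*} [CommRing R] {n : ℕ}
    (B : Matrix (Fin (n+2)) (Fin (n+2)) R)
    (i₁ i₂ j₁ j₂ : Fin (n+2)) (hi : i₁ < i₂) (hj : j₁ < j₂) :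
    B.det * (((B.submatrix i₂.succAbove j₂.succAbove).submatrix
        (Fin.succAbove ⟨i₁.1, (by have := i₂.isLt; have := Fin.lt_iff_val_lt_val.mp hi; omega : i₁.1 + 1 ≤ n+1)⟩)
        (Fin.succAbove ⟨j₁.1, (by have := j₂.isLt; have := Fin.lt_iff_val_lt_val.mp hj; omega : j₁.1 + 1 ≤ n+1)⟩)).det
      * B.det)
    = B.det * ((B.submatrix i₁.succAbove j₁.succAbove).det
        * (B.submatrix i₂.succAbove j₂.succAbove).det
      - (B.submatrix i₁.succAbove j₂.succAbove).det
        * (B.submatrix i₂.succAbove j₁.succAbove).det) := by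
  have hi' : i₁.1 < n+1 := by have := i₂.isLt; have := Fin.lt_iff_val_lt_val.mp hi; omega
  have hj' : j₁.1 < n+1 := by have := j₂.isLt; have := Fin.lt_iff_val_lt_val.mp hj; omega
  show B.det * (((B.submatrix i₂.succAbove j₂.succAbove).submatrix
        (Fin.succAbove ⟨i₁.1, hi'⟩) (Fin.succAbove ⟨j₁.1, hj'⟩)).det * B.det) = _
  set d := B.det with hd
  set inner := ((B.submatrix i₂.succAbove j₂.succAbove).submatrix
        (Fin.succAbove ⟨i₁.1, hi'⟩) (Fin.succAbove ⟨j₁.1, hj'⟩)).det with hinner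
  set N := (((1 : Matrix (Fin (n+2)) (Fin (n+2)) R).updateCol j₁
        (fun k => adjugate B k i₁)).updateCol j₂ (fun k => adjugate B k i₂)) with hNdef
  set P := ((B.updateCol j₁ (Pi.single i₁ d)).updateCol j₂ (Pi.single i₂ d)) with hPdef
  have hBN : B * N = P := by
    ext a b
    rw [Matrix.mul_apply]
    by_cases hb2 : b = j₂
    · rw [hb2]
      have h1 : ∀ k, N k j₂ = adjugate B k i₂ := fun k => by
        rw [hNdef, updateCol_apply, if_pos rfl]
      have h2 : P a j₂ = (Pi.single i₂ d : Fin (n+2) → R) a := by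
        rw [hPdef, updateCol_apply, if_pos rfl]
      simp only [h1, h2]
      calc ∑ k, B a k * adjugate B k i₂ = (B * adjugate B) a i₂ := (Matrix.mul_apply).symm
        _ = (d • (1 : Matrix (Fin (n+2)) (Fin (n+2)) R)) a i₂ := by rw [mul_adjugate]
        _ = (Pi.single i₂ d : Fin (n+2) → R) a := by
          simp [Matrix.smul_apply, one_apply, Pi.single_apply, eq_comm]
    · by_cases hb1 : b = j₁
      · rw [hb1]
        have h1 : ∀ k, N k j₁ = adjugate B k i₁ := fun k => by
          rw [hNdef, updateCol_apply, if_neg hj.ne, updateCol_apply, if_pos rfl]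
        have h2 : P a j₁ = (Pi.single i₁ d : Fin (n+2) → R) a := by
          rw [hPdef, updateCol_apply, if_neg hj.ne, updateCol_apply, if_pos rfl]
        simp only [h1, h2]
        calc ∑ k, B a k * adjugate B k i₁ = (B * adjugate B) a i₁ := (Matrix.mul_apply).symm
          _ = (d • (1 : Matrix (Fin (n+2)) (Fin (n+2)) R)) a i₁ := by rw [mul_adjugate]
          _ = (Pi.single i₁ d : Fin (n+2) → R) a := by
            simp [Matrix.smul_apply, one_apply, Pi.single_apply, eq_comm]
      · have h1 : ∀ k, N k b = (1 : Matrix (Fin (n+2)) (Fin (n+2)) R) k b := fun k => by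
          rw [hNdef, updateCol_apply, if_neg hb2, updateCol_apply, if_neg hb1]
        have h2 : P a b = B a b := by
          rw [hPdef, updateCol_apply, if_neg hb2, updateCol_apply, if_neg hb1]
        simp only [h1, h2]
        simp [one_apply, mul_ite]
  have e0 : d * N.det = P.det := by rw [← hBN, det_mul, hd]
  have eN : N.det = adjugate B j₁ i₁ * adjugate B j₂ i₂
      - adjugate B j₂ i₁ * adjugate B j₁ i₂ :=
    det_one_updateColumn_pair j₁ j₂ hj.ne _ _
  have hsub1 : (B.updateCol j₁ (Pi.single i₁ d)).submatrix i₂.succAbove j₂.succAbove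
      = (B.submatrix i₂.succAbove j₂.succAbove).updateCol ⟨j₁.1, hj'⟩
          (fun k => (Pi.single i₁ d : Fin (n+2) → R) (i₂.succAbove k)) :=
    submatrix_updateColumn_of_lt B i₂.succAbove j₁ j₂ hj hj' _
  have hfun : (fun k => (Pi.single i₁ d : Fin (n+2) → R) (i₂.succAbove k))
      = (Pi.single (⟨i₁.1, hi'⟩ : Fin (n+1)) d : Fin (n+1) → R) := by
    funext k
    by_cases hk : k = ⟨i₁.1, hi'⟩
    · subst hk
      rw [succAbove_mk_of_lt i₁ i₂ hi hi']
      simp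
    · rw [Pi.single_eq_of_ne hk, Pi.single_eq_of_ne]
      intro hcon
      exact hk (Fin.succAbove_right_injective
        (hcon.trans (succAbove_mk_of_lt i₁ i₂ hi hi').symm))
  have eP : P.det = (-1) ^ (i₂ + j₂ : ℕ) * d
      * ((-1) ^ (i₁.1 + j₁.1 : ℕ) * d * inner) := by
    rw [hPdef, det_updateColumn_single, hsub1, hfun, det_updateColumn_single, ← hinner]
  have eAdj11 : adjugate B j₁ i₁
      = (-1) ^ (i₁ + j₁ : ℕ) * (B.submatrix i₁.succAbove j₁.succAbove).det :=
    adjugate_fin_succ_eq_det_submatrix B j₁ i₁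
  have eAdj22 : adjugate B j₂ i₂
      = (-1) ^ (i₂ + j₂ : ℕ) * (B.submatrix i₂.succAbove j₂.succAbove).det :=
    adjugate_fin_succ_eq_det_submatrix B j₂ i₂
  have eAdj12 : adjugate B j₂ i₁
      = (-1) ^ (i₁ + j₂ : ℕ) * (B.submatrix i₁.succAbove j₂.succAbove).det :=
    adjugate_fin_succ_eq_det_submatrix B j₂ i₁
  have eAdj21 : adjugate B j₁ i₂
      = (-1) ^ (i₂ + j₁ : ℕ) * (B.submatrix i₂.succAbove j₁.succAbove).det :=
    adjugate_fin_succ_eq_det_submatrix B j₁ i₂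
  rw [eN, eAdj11, eAdj22, eAdj12, eAdj21, eP] at e0
  set s : R := (-1) ^ (i₁ + i₂ + j₁ + j₂ : ℕ) with hs
  have hss : s * s = 1 := by
    rw [hs, ← pow_add]
    exact Even.neg_one_pow ⟨_, rfl⟩
  have E2 : s * (s * (d * ((B.submatrix i₁.succAbove j₁.succAbove).det
        * (B.submatrix i₂.succAbove j₂.succAbove).det
      - (B.submatrix i₁.succAbove j₂.succAbove).det
        * (B.submatrix i₂.succAbove j₁.succAbove).det)))
      = s * (s * (d * (inner * d))) := by
    linear_combination s * e0
  rw [← mul_assoc, hss, one_mul, ← mul_assoc, hss, one_mul] at E2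
  linear_combination -E2

/-- Desnanot–Jacobi identity. For an `(n+2) × (n+2)` matrix `B` over a
commutative ring and indices `i₁ < i₂`, `j₁ < j₂`, the minor obtained by deleting rows
`i₁, i₂` and columns `j₁, j₂`, times `det B`, equals
`B_{i₁,j₁} B_{i₂,j₂} − B_{i₁,j₂} B_{i₂,j₁}`, where `B_{i,j}` is the minor deleting row
`i` and column `j`. -/
theorem stmt3 {R : Type*} [CommRing R] {n : ℕ} (B : Matrix (Fin (n+2)) (Fin (n+2)) R)
    (i₁ i₂ j₁ j₂ : Fin (n+2)) (hi : i₁ < i₂) (hj : j₁ < j₂) :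
    ((B.submatrix i₂.succAbove j₂.succAbove).submatrix
        (Fin.succAbove ⟨i₁.1, by have := i₂.isLt; have := Fin.lt_iff_val_lt_val.mp hi; omega⟩)
        (Fin.succAbove ⟨j₁.1, by have := j₂.isLt; have := Fin.lt_iff_val_lt_val.mp hj; omega⟩)).det
      * B.det
    = (B.submatrix i₁.succAbove j₁.succAbove).det * (B.submatrix i₂.succAbove j₂.succAbove).det
      - (B.submatrix i₁.succAbove j₂.succAbove).det * (B.submatrix i₂.succAbove j₁.succAbove).det := by
  set X := Matrix.mvPolynomialX (Fin (n+2)) (Fin (n+2)) ℤ with hX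
  have hXne : X.det ≠ 0 := Matrix.det_mvPolynomialX_ne_zero (Fin (n+2)) ℤ
  have key := desnanot_jacobi_aux X i₁ i₂ j₁ j₂ hi hj
  have keyc := mul_left_cancel₀ hXne key
  have keyc' : ((X.submatrix i₂.succAbove j₂.succAbove).submatrix
        (Fin.succAbove ⟨i₁.1, by have := i₂.isLt; have := Fin.lt_iff_val_lt_val.mp hi; omega⟩)
        (Fin.succAbove ⟨j₁.1, by have := j₂.isLt; have := Fin.lt_iff_val_lt_val.mp hj; omega⟩)).det
      * X.det
    = (X.submatrix i₁.succAbove j₁.succAbove).det * (X.submatrix i₂.succAbove j₂.succAbove).det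
      - (X.submatrix i₁.succAbove j₂.succAbove).det * (X.submatrix i₂.succAbove j₁.succAbove).det :=
    keyc
  have hmap := congrArg (MvPolynomial.eval₂Hom (Int.castRingHom R)
      (fun p : Fin (n+2) × Fin (n+2) => B p.1 p.2)) keyc'
  have hXB : X.map (MvPolynomial.eval₂Hom (Int.castRingHom R)
      (fun p : Fin (n+2) × Fin (n+2) => B p.1 p.2)) = B := by
    rw [hX]
    exact Matrix.mvPolynomialX_map_eval₂ _ B
  simp only [_root_.map_mul, _root_.map_sub, RingHom.map_det, RingHom.mapMatrix_apply, ← Matrix.submatrix_map, hXB] at hmap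
  exact hmap
end

section
/- (Chio pivotal condensation) Fix n ≥ 2, and let B be an n×n matrix over a commutative ring with entries b_{i,j}. Let B' be the (n−1)×(n−1) matrix whose (i,j) entry is b_{i,j}·b_{n,n} − b_{i,n}·b_{n,j}. Then det(B') = b_{n,n}^{n−2}·det(B). -/
open Matrix

lemma chio_aux {R : Type*} [CommRing R] {n : ℕ} (M : Matrix (Fin (n+2)) (Fin (n+2)) R) :
    M (Fin.last (n+1)) (Fin.last (n+1)) *
      (Matrix.of fun i j : Fin (n+1) =>
        M i.castSucc j.castSucc * M (Fin.last (n+1)) (Fin.last (n+1))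
          - M i.castSucc (Fin.last (n+1)) * M (Fin.last (n+1)) j.castSucc).det
    = M (Fin.last (n+1)) (Fin.last (n+1)) ^ (n+1) * M.det := by
  set a := M (Fin.last (n+1)) (Fin.last (n+1)) with ha
  set D : Matrix (Fin (n+2)) (Fin (n+2)) R := Matrix.of fun i j =>
    if i = Fin.last (n+1) then (if j = Fin.last (n+1) then 1 else 0)
    else ((if j = i then a else 0) - (if j = Fin.last (n+1) then M i (Fin.last (n+1)) else 0))
    with hD
  have hDdet : D.det = a ^ (n+1) := by
    rw [Matrix.det_of_upperTriangular]
    · have : ∀ i : Fin (n+1), D i.castSucc i.castSucc = a := by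
        intro i
        simp [hD, Fin.castSucc_lt_last i, (Fin.castSucc_lt_last i).ne]
      rw [Fin.prod_univ_castSucc, Finset.prod_congr rfl (fun i _ => this i),
        Finset.prod_const]
      simp [hD]
    · intro i j hij
      replace hij : j < i := hij
      have hjl : j ≠ Fin.last (n+1) := (hij.trans_le (Fin.le_last i)).ne
      by_cases hi : i = Fin.last (n+1)
      · simp [hD, hi, hjl]
      · simp [hD, hi, hjl, hij.ne]
  have hDM : ∀ i j : Fin (n+1), (D * M) i.castSucc j.castSucc =
      M i.castSucc j.castSucc * a - M i.castSucc (Fin.last (n+1)) * M (Fin.last (n+1)) j.castSucc := by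
    intro i j
    simp only [Matrix.mul_apply, hD, Matrix.of_apply, (Fin.castSucc_lt_last i).ne, if_false,
      sub_mul, ite_mul, zero_mul]
    rw [Finset.sum_sub_distrib, Finset.sum_ite_eq' , Finset.sum_ite_eq']
    simp [mul_comm]
  have hcol : ∀ i : Fin (n+2), i ≠ Fin.last (n+1) → (D * M) i (Fin.last (n+1)) = 0 := by
    intro i hi
    simp only [Matrix.mul_apply, hD, Matrix.of_apply, hi, if_false, sub_mul, ite_mul, zero_mul]
    rw [Finset.sum_sub_distrib, Finset.sum_ite_eq', Finset.sum_ite_eq']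
    simp [mul_comm, ha]
  have hlast : (D * M) (Fin.last (n+1)) (Fin.last (n+1)) = a := by
    simp only [Matrix.mul_apply, hD, Matrix.of_apply, if_true, ite_mul, zero_mul, one_mul]
    rw [Finset.sum_ite_eq']
    simp [ha]
  have h1 : (D * M).det = a ^ (n+1) * M.det := by
    rw [Matrix.det_mul, hDdet]
  rw [Matrix.det_succ_column _ (Fin.last (n+1))] at h1
  rw [Finset.sum_eq_single (Fin.last (n+1))] at h1
  · rw [hlast] at h1
    have hsign : ((-1:R) ^ ((Fin.last (n+1) : ℕ) + (Fin.last (n+1) : ℕ))) = 1 := by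
      rw [← two_mul, pow_mul]; simp
    rw [hsign, one_mul] at h1
    rw [← h1]
    have hsub : ((D * M).submatrix (Fin.last (n+1)).succAbove (Fin.last (n+1)).succAbove) =
        (Matrix.of fun i j : Fin (n+1) =>
          M i.castSucc j.castSucc * a
            - M i.castSucc (Fin.last (n+1)) * M (Fin.last (n+1)) j.castSucc) := by
      ext i j
      simp [Matrix.submatrix_apply, Fin.succAbove_last, hDM i j]
    rw [hsub]
  · intro i _ hi
    rw [hcol i hi]
    ring
  · simp

/-- Chio pivotal condensation. For an `(n+2) × (n+2)` matrix `B` over a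
commutative ring, if `B'` is the `(n+1) × (n+1)` matrix with entries
`b_{i,j} b_{n,n} − b_{i,n} b_{n,j}`, then `det B' = b_{n,n}^n · det B`. -/
theorem stmt4 {R : Type*} [CommRing R] {n : ℕ} (B : Matrix (Fin (n+2)) (Fin (n+2)) R)
    (B' : Matrix (Fin (n+1)) (Fin (n+1)) R)
    (hB' : ∀ i j, B' i j =
      B i.castSucc j.castSucc * B (Fin.last (n+1)) (Fin.last (n+1))
        - B i.castSucc (Fin.last (n+1)) * B (Fin.last (n+1)) j.castSucc) :
    B'.det = B (Fin.last (n+1)) (Fin.last (n+1)) ^ n * B.det := by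
  -- generic matrix over polynomials
  set σ := Fin (n+2) × Fin (n+2)
  set X : Matrix (Fin (n+2)) (Fin (n+2)) (MvPolynomial σ ℤ) :=
    Matrix.of fun i j => MvPolynomial.X (i, j) with hX
  have key : (Matrix.of fun i j : Fin (n+1) =>
        X i.castSucc j.castSucc * X (Fin.last (n+1)) (Fin.last (n+1))
          - X i.castSucc (Fin.last (n+1)) * X (Fin.last (n+1)) j.castSucc).det
      = X (Fin.last (n+1)) (Fin.last (n+1)) ^ n * X.det := by
    have h := chio_aux X
    have ha : X (Fin.last (n+1)) (Fin.last (n+1)) ≠ 0 := MvPolynomial.X_ne_zero _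
    apply mul_left_cancel₀ ha
    rw [h]; ring
  -- specialize via aeval
  let φ : MvPolynomial σ ℤ →+* R := (MvPolynomial.aeval (fun p : σ => B p.1 p.2)).toRingHom
  have hφX : ∀ i j, φ (X i j) = B i j := by
    intro i j; simp [hX, φ]
  have := congrArg φ key
  rw [RingHom.map_det, _root_.map_mul, map_pow, RingHom.map_det, hφX] at this
  have h2 : φ.mapMatrix X = B := by
    ext i j
    simp [RingHom.mapMatrix_apply, Matrix.map_apply, hφX]
  have h3 : φ.mapMatrix (Matrix.of fun i j : Fin (n+1) =>
      X i.castSucc j.castSucc * X (Fin.last (n+1)) (Fin.last (n+1))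
        - X i.castSucc (Fin.last (n+1)) * X (Fin.last (n+1)) j.castSucc) = B' := by
    ext i j
    simp [RingHom.mapMatrix_apply, Matrix.map_apply, hφX, hB' i j]
  rw [h2, h3] at this
  exact this
end

section
/- If B is an m×n matrix with integer entries, then D_k*(B) divides D_{k+1}*(B) for all k with 2 ≤ k ≤ min{m,n} − 1, where D_k*(B) is the gcd of the determinants of all k×k submatrices of B that include the last row and the last column. -/
open Matrix

/-- `Dk B k` is the gcd of all `k × k` minors of `B`. -/
noncomputable def Dk {m n : ℕ} (B : Matrix (Fin m) (Fin n) ℤ) (k : ℕ) : ℤ :=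
  Finset.univ.gcd fun p : (Fin k ↪ Fin m) × (Fin k ↪ Fin n) =>
    (B.submatrix p.1 p.2).det

/-- `DkStar B k` is the gcd of all `k × k` minors of `B` whose row set contains the
last row and whose column set contains the last column. -/
noncomputable def DkStar {m n : ℕ} (B : Matrix (Fin (m+1)) (Fin (n+1)) ℤ) (k : ℕ) : ℤ :=
  (Finset.univ.filter fun p : (Fin k ↪ Fin (m+1)) × (Fin k ↪ Fin (n+1)) =>
    (∃ i, p.1 i = Fin.last m) ∧ (∃ j, p.2 j = Fin.last n)).gcd
    fun p => (B.submatrix p.1 p.2).det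

/-- Chio condensation of an `(n+1) × (n+1)` matrix at the entry `(n,n)`. -/
def chio {n : ℕ} (L : Matrix (Fin (n+1)) (Fin (n+1)) ℤ) : Matrix (Fin n) (Fin n) ℤ :=
  fun i j => L i.castSucc j.castSucc * L (Fin.last n) (Fin.last n)
    - L i.castSucc (Fin.last n) * L (Fin.last n) j.castSucc

/-- gcd of the entries of the last row. -/
def lastRowGcd {n : ℕ} (L : Matrix (Fin (n+1)) (Fin (n+1)) ℤ) : ℤ :=
  Finset.univ.gcd fun j => L (Fin.last n) j

/-- Arithmetic key: if `(D-x)(D-y) = z*w` with `g` dividing `x,y,z,w`, then `g ∣ D`. -/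
lemma key_arith (g D x y z w : ℤ) (hx : g ∣ x) (hy : g ∣ y) (hz : g ∣ z) (hw : g ∣ w)
    (h : (D - x) * (D - y) = z * w) : g ∣ D := by
  rcases eq_or_ne g 0 with rfl | hg
  · rw [zero_dvd_iff] at hx hy hz hw
    subst hx; subst hy; subst hz; subst hw
    rw [zero_dvd_iff]
    have : D * D = 0 := by linarith [h]
    exact mul_self_eq_zero.mp (by linarith [h, this])
  · obtain ⟨a, rfl⟩ := hx
    obtain ⟨b, rfl⟩ := hy
    obtain ⟨c, rfl⟩ := hz
    obtain ⟨e, rfl⟩ := hw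
    set d : ℤ := (Int.gcd D g : ℤ) with hd
    have hdpos : 0 < Int.gcd D g := Int.gcd_pos_of_ne_zero_right D hg
    have hdD : d ∣ D := Int.gcd_dvd_left D g
    have hdg : d ∣ g := Int.gcd_dvd_right D g
    obtain ⟨D₀, hD₀⟩ := hdD
    obtain ⟨g₀, hg₀⟩ := hdg
    have hdne : d ≠ 0 := by positivity
    have hcop : IsCoprime D₀ g₀ := by
      rw [Int.isCoprime_iff_gcd_eq_one]
      have h1 : D / d = D₀ := by rw [hD₀]; exact Int.mul_ediv_cancel_left _ hdne
      have h2 : g / d = g₀ := by rw [hg₀]; exact Int.mul_ediv_cancel_left _ hdne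
      have := Int.gcd_div_gcd_div_gcd (i := D) (j := g) hdpos
      rwa [h1, h2] at this
    -- reduce the equation
    have hkey : D₀ * D₀ = g₀ * (g₀ * c * e + a * D₀ + b * D₀ - g₀ * a * b) := by
      have h' : (d * d) * (D₀ * D₀) =
          (d * d) * (g₀ * (g₀ * c * e + a * D₀ + b * D₀ - g₀ * a * b)) := by
        rw [hD₀, hg₀] at h; ring_nf; ring_nf at h; linarith [h]
      exact mul_left_cancel₀ (mul_ne_zero hdne hdne) h'
    have hdvd : g₀ ∣ D₀ * D₀ := ⟨_, hkey⟩
    have hunit : IsUnit g₀ :=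
      ((hcop.symm.mul_right hcop.symm).isUnit_of_dvd' dvd_rfl hdvd)
    rw [hg₀]
    exact hunit.mul_right_dvd.mpr ⟨D₀, hD₀⟩

/-- Local key lemma: if `g` divides every "star" cofactor minor of an
`(N+1) × (N+1)` matrix (deleting a row `≠ s` and a column `≠ t`), and `2 ≤ N`,
then `g` divides the determinant. -/
lemma local_key {N : ℕ} (hN : 2 ≤ N) (L : Matrix (Fin (N+1)) (Fin (N+1)) ℤ)
    (s t : Fin (N+1)) (g : ℤ)
    (H : ∀ i j : Fin (N+1), i ≠ s → j ≠ t →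
      g ∣ (L.submatrix i.succAbove j.succAbove).det) :
    g ∣ L.det := by
  -- two distinct row indices different from s
  obtain ⟨e₀, he₀, e₁, he₁, hne⟩ :
      ∃ e₀ ∈ Finset.univ.erase s, ∃ e₁ ∈ Finset.univ.erase s, e₀ ≠ e₁ := by
    refine Finset.one_lt_card.mp ?_
    rw [Finset.card_erase_of_mem (Finset.mem_univ s), Finset.card_univ, Fintype.card_fin]
    omega
  have he₀s : e₀ ≠ s := (Finset.mem_erase.mp he₀).1
  have he₁s : e₁ ≠ s := (Finset.mem_erase.mp he₁).1
  -- cofactor expansion of `updateRow L i (L r)` along row `i`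
  have expand : ∀ r i : Fin (N+1), (L.updateRow i (L r)).det =
      ∑ j : Fin (N+1), (-1) ^ ((i : ℕ) + (j : ℕ)) * L r j *
        (L.submatrix i.succAbove j.succAbove).det := by
    intro r i
    rw [Matrix.det_succ_row _ i]
    refine Finset.sum_congr rfl fun j _ => ?_
    congr 1
    · rw [Matrix.updateRow_self]
    · congr 1
      ext a b
      simp [Matrix.submatrix_apply, Matrix.updateRow_ne (Fin.succAbove_ne i a)]
  have hval : ∀ r i : Fin (N+1),
      (∑ j : Fin (N+1), (-1) ^ ((i : ℕ) + (j : ℕ)) * L r j *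
        (L.submatrix i.succAbove j.succAbove).det) = if r = i then L.det else 0 := by
    intro r i
    rw [← expand r i]
    by_cases h : r = i
    · subst h; rw [if_pos rfl, Matrix.updateRow_eq_self]
    · rw [if_neg h]
      exact Matrix.det_zero_of_row_eq (Ne.symm h)
        (by rw [Matrix.updateRow_self, Matrix.updateRow_ne h])
  -- split off the `j = t` term
  set A : Fin (N+1) → Fin (N+1) → ℤ := fun r i =>
    (-1) ^ ((i : ℕ) + (t : ℕ)) * L r t * (L.submatrix i.succAbove t.succAbove).det with hA
  set G : Fin (N+1) → Fin (N+1) → ℤ := fun r i =>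
    ∑ j ∈ Finset.univ.erase t, (-1) ^ ((i : ℕ) + (j : ℕ)) * L r j *
      (L.submatrix i.succAbove j.succAbove).det with hG
  have hsplit : ∀ r i : Fin (N+1), A r i + G r i = if r = i then L.det else 0 := by
    intro r i
    rw [← hval r i, hA, hG]
    simp only []
    exact Finset.add_sum_erase _
      (fun j : Fin (N+1) => (-1) ^ ((i : ℕ) + (j : ℕ)) * L r j *
        (L.submatrix i.succAbove j.succAbove).det) (Finset.mem_univ t)
  have hGdvd : ∀ r i : Fin (N+1), i ≠ s → g ∣ G r i := by
    intro r i hi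
    exact Finset.dvd_sum fun j hj =>
      Dvd.dvd.mul_left (H i j hi (Finset.mem_erase.mp hj).1) _
  -- rank-one identity
  have hrank : A e₀ e₀ * A e₁ e₁ = A e₀ e₁ * A e₁ e₀ := by
    simp only [hA]; ring
  have h00 : A e₀ e₀ = L.det - G e₀ e₀ := by
    have := hsplit e₀ e₀; rw [if_pos rfl] at this; linarith
  have h11 : A e₁ e₁ = L.det - G e₁ e₁ := by
    have := hsplit e₁ e₁; rw [if_pos rfl] at this; linarith
  have h01 : A e₀ e₁ = - G e₀ e₁ := by
    have := hsplit e₀ e₁; rw [if_neg hne] at this; linarith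
  have h10 : A e₁ e₀ = - G e₁ e₀ := by
    have := hsplit e₁ e₀; rw [if_neg (Ne.symm hne)] at this; linarith
  refine key_arith g L.det (G e₀ e₀) (G e₁ e₁) (G e₀ e₁) (G e₁ e₀)
    (hGdvd e₀ e₀ he₀s) (hGdvd e₁ e₁ he₁s) (hGdvd e₀ e₁ he₁s) (hGdvd e₁ e₀ he₀s) ?_
  rw [← h00, ← h11, hrank, h01, h10]
  ring

/-- `D_k*(B)` divides `D_{k+1}*(B)` for `2 ≤ k ≤ min{m,n} − 1`. -/
theorem stmt5 {m n : ℕ} (B : Matrix (Fin (m+1)) (Fin (n+1)) ℤ) (k : ℕ)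
    (hk1 : 2 ≤ k) (hk2 : k + 1 ≤ min (m+1) (n+1)) :
    DkStar B k ∣ DkStar B (k+1) := by
  rw [DkStar]
  refine Finset.dvd_gcd fun p hp => ?_
  obtain ⟨-, ⟨i₀, hi₀⟩, ⟨j₀, hj₀⟩⟩ := Finset.mem_filter.mp hp
  refine local_key hk1 (B.submatrix p.1 p.2) i₀ j₀ _ fun i j hi hj => ?_
  have hmem : (((Fin.succAboveEmb i).trans p.1, (Fin.succAboveEmb j).trans p.2) :
      (Fin k ↪ Fin (m+1)) × (Fin k ↪ Fin (n+1))) ∈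
      (Finset.univ.filter fun q : (Fin k ↪ Fin (m+1)) × (Fin k ↪ Fin (n+1)) =>
        (∃ a, q.1 a = Fin.last m) ∧ (∃ b, q.2 b = Fin.last n)) := by
    refine Finset.mem_filter.mpr ⟨Finset.mem_univ _, ?_, ?_⟩
    · obtain ⟨z, hz⟩ := Fin.exists_succAbove_eq (Ne.symm hi)
      exact ⟨z, by simp [Fin.succAboveEmb, hz, hi₀]⟩
    · obtain ⟨z, hz⟩ := Fin.exists_succAbove_eq (Ne.symm hj)
      exact ⟨z, by simp [Fin.succAboveEmb, hz, hj₀]⟩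
  have heq : (B.submatrix p.1 p.2).submatrix i.succAbove j.succAbove =
      B.submatrix ((Fin.succAboveEmb i).trans p.1) ((Fin.succAboveEmb j).trans p.2) := by
    ext a b
    simp [Fin.succAboveEmb]
  rw [heq]
  show (Finset.univ.filter fun q : (Fin k ↪ Fin (m+1)) × (Fin k ↪ Fin (n+1)) =>
    (∃ a, q.1 a = Fin.last m) ∧ (∃ b, q.2 b = Fin.last n)).gcd
    (fun q => (B.submatrix q.1 q.2).det) ∣ _
  exact Finset.gcd_dvd hmem
end

section
/- Fix m, n ≥ 2. If B is an m×n matrix with integer entries, then D_1(B)·D_2*(B) divides D_1*(B)·D_2(B), where D_1(B) is the gcd of all entries of B, D_2(B) is the gcd of all 2×2 minors of B, D_1*(B) = b_{m,n}, and D_2*(B) is the gcd of all 2×2 minors of B involving the last row and the last column. -/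
open Matrix

/-- Cancellation lemma: if `h ∣ T` and `s * gcd h s ∣ h * T` then `s ∣ T`. -/
lemma Lcancel (h T s : ℤ) (h1 : h ∣ T) (h2 : s * (Int.gcd h s : ℤ) ∣ h * T) : s ∣ T := by
  by_cases hd : (Int.gcd h s : ℤ) = 0
  · have hgs : Int.gcd h s = 0 := by exact_mod_cast hd
    have hh0 : h = 0 := (Int.gcd_eq_zero_iff.mp hgs).1
    have hs0 : s = 0 := (Int.gcd_eq_zero_iff.mp hgs).2
    subst hh0; subst hs0
    simpa using h1
  · set d : ℤ := (Int.gcd h s : ℤ) with hdd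
    obtain ⟨h₁, hh⟩ : d ∣ h := Int.gcd_dvd_left _ _
    obtain ⟨s₁, hs⟩ : d ∣ s := Int.gcd_dvd_right _ _
    have hpos : 0 < Int.gcd h s := Nat.pos_of_ne_zero (fun h0 => hd (by rw [hdd, h0]; rfl))
    have hq1 : h / d = h₁ := by rw [hh]; exact Int.mul_ediv_cancel_left _ hd
    have hq2 : s / d = s₁ := by rw [hs]; exact Int.mul_ediv_cancel_left _ hd
    have hcop : IsCoprime s₁ h₁ := by
      rw [Int.isCoprime_iff_gcd_eq_one]
      rw [← hq1, ← hq2, Int.gcd_comm]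
      exact Int.gcd_div_gcd_div_gcd hpos
    obtain ⟨T', rfl⟩ := h1
    have h3 : s₁ ∣ h₁ * (h₁ * T') := by
      have h2' : d ^ 2 * s₁ ∣ d ^ 2 * (h₁ * (h₁ * T')) := by
        calc d ^ 2 * s₁ = s * d := by rw [hs]; ring
          _ ∣ h * (h * T') := h2
          _ = d ^ 2 * (h₁ * (h₁ * T')) := by rw [hh]; ring
      exact (mul_dvd_mul_iff_left (pow_ne_zero 2 hd)).mp h2'
    have h4 : s₁ ∣ h₁ * T' := hcop.dvd_of_dvd_mul_left h3
    calc s = d * s₁ := hs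
      _ ∣ d * (h₁ * T') := mul_dvd_mul_left d h4
      _ = h * T' := by rw [hh]; ring

/-- Arithmetic core: the divisibility for a single 2×2 minor. -/
lemma core (g s b x00 x01 x10 x11 u0 u1 v0 v1 : ℤ)
    (hb : g ∣ b) (h00 : g ∣ x00) (h01 : g ∣ x01) (h10 : g ∣ x10) (h11 : g ∣ x11)
    (hc00 : s ∣ x00 * b - u0 * v0) (hc01 : s ∣ x01 * b - u0 * v1)
    (hc10 : s ∣ x10 * b - u1 * v0) (hc11 : s ∣ x11 * b - u1 * v1) :
    g * s ∣ b * (x00 * x11 - x01 * x10) := by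
  obtain ⟨M₀, hM⟩ : g ^ 2 ∣ x00 * x11 - x01 * x10 := by
    have := dvd_sub (mul_dvd_mul h00 h11) (mul_dvd_mul h01 h10)
    simpa [pow_two] using this
  set d : ℤ := (Int.gcd (g * b) s : ℤ) with hdd
  have hd1 : d ∣ g * b := Int.gcd_dvd_left _ _
  have hd2 : d ∣ s := Int.gcd_dvd_right _ _
  -- the key identity and term-by-term divisibility
  have key : s * d ∣ (g * b) * (g * b * M₀) := by
    have e : (g * b) * (g * b * M₀) = b ^ 2 * (x00 * x11 - x01 * x10) := by
      rw [hM]; ring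
    rw [e]
    have idt : b ^ 2 * (x00 * x11 - x01 * x10)
        = (x00 * b - u0 * v0) * (b * x11) - (x01 * b - u0 * v1) * (b * x10)
          + (x11 * b - u1 * v1) * (u0 * v0) - (x10 * b - u1 * v0) * (u0 * v1) := by
      ring
    rw [idt]
    have t1 : s * d ∣ (x00 * b - u0 * v0) * (b * x11) := by
      refine mul_dvd_mul hc00 (hd1.trans ?_)
      obtain ⟨y, hy⟩ := h11
      exact ⟨y, by rw [hy]; ring⟩
    have t2 : s * d ∣ (x01 * b - u0 * v1) * (b * x10) := by
      refine mul_dvd_mul hc01 (hd1.trans ?_)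
      obtain ⟨y, hy⟩ := h10
      exact ⟨y, by rw [hy]; ring⟩
    have t3 : s * d ∣ (x11 * b - u1 * v1) * (u0 * v0) := by
      refine mul_dvd_mul hc11 ?_
      have e2 : u0 * v0 = x00 * b - (x00 * b - u0 * v0) := by ring
      rw [e2]
      refine dvd_sub (hd1.trans ?_) (hd2.trans hc00)
      obtain ⟨y, hy⟩ := h00
      exact ⟨y, by rw [hy]; ring⟩
    have t4 : s * d ∣ (x10 * b - u1 * v0) * (u0 * v1) := by
      refine mul_dvd_mul hc10 ?_
      have e2 : u0 * v1 = x01 * b - (x01 * b - u0 * v1) := by ring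
      rw [e2]
      refine dvd_sub (hd1.trans ?_) (hd2.trans hc01)
      obtain ⟨y, hy⟩ := h01
      exact ⟨y, by rw [hy]; ring⟩
    exact dvd_sub (dvd_add (dvd_sub t1 t2) t3) t4
  have hL : s ∣ g * b * M₀ := by
    refine Lcancel (g * b) (g * b * M₀) s ⟨M₀, by ring⟩ ?_
    rw [Int.mul_comm s d] at key
    rw [hdd] at key
    exact (by simpa [hdd, Int.mul_comm] using key)
  have final : b * (x00 * x11 - x01 * x10) = g * (g * b * M₀) := by rw [hM]; ring
  rw [final]
  exact mul_dvd_mul_left g hL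

/-- for an `m × n` integer matrix with `m, n ≥ 2`,
`D_1(B) · D_2*(B)` divides `D_1*(B) · D_2(B)`, where `D_1*(B) = b_{m,n}`. -/
theorem stmt7 {m n : ℕ} (B : Matrix (Fin (m+2)) (Fin (n+2)) ℤ) :
    Dk B 1 * DkStar B 2 ∣ B (Fin.last (m+1)) (Fin.last (n+1)) * Dk B 2 := by
  have hA : ∀ (i : Fin (m+2)) (j : Fin (n+2)), Dk B 1 ∣ B i j := by
    intro i j
    have h := Finset.gcd_dvd (f := fun p : (Fin 1 ↪ Fin (m+2)) × (Fin 1 ↪ Fin (n+2)) =>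
      (B.submatrix p.1 p.2).det) (Finset.mem_univ
      ((⟨fun _ => i, fun a b _ => Subsingleton.elim a b⟩,
        ⟨fun _ => j, fun a b _ => Subsingleton.elim a b⟩) :
        (Fin 1 ↪ Fin (m+2)) × (Fin 1 ↪ Fin (n+2))))
    simp [Dk, Matrix.det_fin_one] at h
    simp only [Dk, Matrix.det_fin_one, Matrix.submatrix_apply]
    exact h
  have hB : ∀ (i : Fin (m+2)) (j : Fin (n+2)),
      DkStar B 2 ∣ B i j * B (Fin.last (m+1)) (Fin.last (n+1))
        - B i (Fin.last (n+1)) * B (Fin.last (m+1)) j := by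
    intro i j
    by_cases hi : i = Fin.last (m+1)
    · subst hi
      have e : B (Fin.last (m+1)) j * B (Fin.last (m+1)) (Fin.last (n+1))
          - B (Fin.last (m+1)) (Fin.last (n+1)) * B (Fin.last (m+1)) j = 0 := by ring
      rw [e]; exact dvd_zero _
    by_cases hj : j = Fin.last (n+1)
    · subst hj
      have e : B i (Fin.last (n+1)) * B (Fin.last (m+1)) (Fin.last (n+1))
          - B i (Fin.last (n+1)) * B (Fin.last (m+1)) (Fin.last (n+1)) = 0 := by ring
      rw [e]; exact dvd_zero _
    · have inj1 : Function.Injective ![i, Fin.last (m+1)] := by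
        intro a b hab
        fin_cases a <;> fin_cases b <;> simp_all
      have inj2 : Function.Injective ![j, Fin.last (n+1)] := by
        intro a b hab
        fin_cases a <;> fin_cases b <;> simp_all
      have hmem : ((⟨![i, Fin.last (m+1)], inj1⟩, ⟨![j, Fin.last (n+1)], inj2⟩) :
          (Fin 2 ↪ Fin (m+2)) × (Fin 2 ↪ Fin (n+2))) ∈
          (Finset.univ.filter fun p : (Fin 2 ↪ Fin (m+2)) × (Fin 2 ↪ Fin (n+2)) =>
            (∃ a, p.1 a = Fin.last (m+1)) ∧ (∃ b, p.2 b = Fin.last (n+1))) := by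
        refine Finset.mem_filter.mpr ⟨Finset.mem_univ _, ⟨1, ?_⟩, ⟨1, ?_⟩⟩ <;> simp
      have h := Finset.gcd_dvd (f := fun p : (Fin 2 ↪ Fin (m+2)) × (Fin 2 ↪ Fin (n+2)) =>
        (B.submatrix p.1 p.2).det) hmem
      simp only [Matrix.det_fin_two, Matrix.submatrix_apply, Function.Embedding.coeFn_mk] at h
      simpa [DkStar, Matrix.det_fin_two] using h
  have hmain : ∀ p ∈ (Finset.univ : Finset ((Fin 2 ↪ Fin (m+2)) × (Fin 2 ↪ Fin (n+2)))),
      Dk B 1 * DkStar B 2 ∣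
        B (Fin.last (m+1)) (Fin.last (n+1)) * (B.submatrix p.1 p.2).det := by
    intro p _
    rw [Matrix.det_fin_two]
    simp only [Matrix.submatrix_apply]
    exact core (Dk B 1) (DkStar B 2) (B (Fin.last (m+1)) (Fin.last (n+1)))
      (B (p.1 0) (p.2 0)) (B (p.1 0) (p.2 1)) (B (p.1 1) (p.2 0)) (B (p.1 1) (p.2 1))
      (B (p.1 0) (Fin.last (n+1))) (B (p.1 1) (Fin.last (n+1)))
      (B (Fin.last (m+1)) (p.2 0)) (B (Fin.last (m+1)) (p.2 1))
      (hA _ _) (hA _ _) (hA _ _) (hA _ _) (hA _ _)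
      (hB _ _) (hB _ _) (hB _ _) (hB _ _)
  have hgcd : Dk B 1 * DkStar B 2 ∣
      Finset.univ.gcd (fun p : (Fin 2 ↪ Fin (m+2)) × (Fin 2 ↪ Fin (n+2)) =>
        B (Fin.last (m+1)) (Fin.last (n+1)) * (B.submatrix p.1 p.2).det) :=
    Finset.dvd_gcd hmain
  rw [Finset.gcd_mul_left] at hgcd
  have hassoc : Associated
      (normalize (B (Fin.last (m+1)) (Fin.last (n+1))) * Dk B 2)
      (B (Fin.last (m+1)) (Fin.last (n+1)) * Dk B 2) :=
    (normalize_associated _).mul_right _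
  exact hgcd.trans hassoc.dvd
end

section
/- Let (d, r) be an arithmetical structure on a connected loopless graph G with n vertices, let L = diag(d) − A with A the adjacency matrix, and let L' be the (n−1)×(n−1) matrix resulting from the Keyes–Reiter operation at vertex v_n, i.e., ℓ'_{i,j} = ℓ_{i,j}·ℓ_{n,n} − ℓ_{i,n}·ℓ_{n,j} for i,j ∈ [n−1]. Then for all k ∈ [n−2], D_k(L') = d_n^{k−1}·D_{k+1}*(L), where D_k denotes the gcd of all k×k minors and D_k*(L) denotes the gcd of all k×k minors of L that include row n and column n. -/
open Matrix

/-- Chio's condensation identity. -/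
lemma chio_mul_det {k : ℕ} (M : Matrix (Fin (k+1)) (Fin (k+1)) ℤ) :
    M (Fin.last k) (Fin.last k) * (chio M).det
      = M (Fin.last k) (Fin.last k) ^ k * M.det := by
  set a := M (Fin.last k) (Fin.last k) with ha
  set E : Matrix (Fin (k+1)) (Fin (k+1)) ℤ := fun i j =>
    Fin.lastCases (if j = Fin.last k then 1 else 0)
      (fun i' => if j = i'.castSucc then a
        else if j = Fin.last k then -(M i'.castSucc (Fin.last k)) else 0) i with hE
  set N : Matrix (Fin (k+1)) (Fin (k+1)) ℤ := fun i j =>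
    Fin.lastCases (M (Fin.last k) j)
      (fun i' => a * M i'.castSucc j - M i'.castSucc (Fin.last k) * M (Fin.last k) j) i
    with hN
  have hEM : E * M = N := by
    ext i j
    induction i using Fin.lastCases with
    | last =>
      rw [Matrix.mul_apply]
      simp [hE, hN, Finset.sum_ite_eq']
    | cast i =>
      have key : ∀ t, E i.castSucc t * M t j
          = (if t = i.castSucc then a * M t j else 0)
            + (if t = Fin.last k then (-(M i.castSucc (Fin.last k))) * M t j else 0) := by
        intro t
        simp only [hE, Fin.lastCases_castSucc]
        rcases eq_or_ne t i.castSucc with rfl | h1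
        · rw [if_pos rfl, if_pos rfl, if_neg (Fin.castSucc_lt_last i).ne, add_zero]
        · rw [if_neg h1, if_neg h1, zero_add]
          rcases eq_or_ne t (Fin.last k) with rfl | h2
          · rw [if_pos rfl, if_pos rfl]
          · rw [if_neg h2, if_neg h2, zero_mul]
      rw [Matrix.mul_apply, Finset.sum_congr rfl (fun t _ => key t),
        Finset.sum_add_distrib, Finset.sum_ite_eq', Finset.sum_ite_eq']
      simp [hN]
      ring
  have hdetE : E.det = a ^ k := by
    have htri : E.BlockTriangular id := by
      intro i j hij
      induction i using Fin.lastCases with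
      | last =>
        have : j ≠ Fin.last k := ne_of_lt hij
        simp [hE, this]
      | cast i =>
        have h1 : j ≠ i.castSucc := ne_of_lt hij
        have h2 : j ≠ Fin.last k := ne_of_lt (lt_of_lt_of_le hij (Fin.le_last _))
        simp [hE, h1, h2]
    rw [Matrix.det_of_upperTriangular htri, Fin.prod_univ_castSucc]
    simp [hE, (Fin.castSucc_lt_last _).ne]
  have hdetN : N.det = (chio M).det * a := by
    have e : (Fin k ⊕ Fin 1) ≃ Fin (k+1) := finSumFinEquiv
    have hNB : N.submatrix finSumFinEquiv finSumFinEquiv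
        = Matrix.fromBlocks (chio M) 0 (fun _ j => M (Fin.last k) j.castSucc)
            (fun _ _ => a) := by
      ext i j
      have hinr : ∀ j : Fin 1, finSumFinEquiv (Sum.inr j) = Fin.last k := by
        intro j
        have : j = 0 := Subsingleton.elim _ _
        subst this
        rfl
      have hinl : ∀ i : Fin k, finSumFinEquiv (Sum.inl i) = i.castSucc := fun _ => rfl
      cases i with
      | inl i =>
        cases j with
        | inl j =>
          erw [Matrix.submatrix_apply, Matrix.fromBlocks_apply₁₁]
          simp only [Matrix.submatrix_apply, hinl, hN, Fin.lastCases_castSucc,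
            Matrix.fromBlocks_apply₁₁, chio]
          ring
        | inr j =>
          erw [Matrix.submatrix_apply, Matrix.fromBlocks_apply₁₂]
          simp only [Matrix.submatrix_apply, hinl, hinr, hN, Fin.lastCases_castSucc,
            Matrix.fromBlocks_apply₁₂, Matrix.zero_apply, ← ha]
          ring
      | inr i =>
        cases j with
        | inl j =>
          erw [Matrix.submatrix_apply, Matrix.fromBlocks_apply₂₁]
          simp only [Matrix.submatrix_apply, hinl, hinr, hN, Fin.lastCases_last,
            Matrix.fromBlocks_apply₂₁]
        | inr j =>
          erw [Matrix.submatrix_apply, Matrix.fromBlocks_apply₂₂]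
          simp only [Matrix.submatrix_apply, hinr, hN, Fin.lastCases_last,
            Matrix.fromBlocks_apply₂₂, ha]
    have := Matrix.det_submatrix_equiv_self (finSumFinEquiv : Fin k ⊕ Fin 1 ≃ Fin (k+1)) N
    rw [hNB] at this
    rw [← this]
    exact (Matrix.det_fromBlocks_zero₁₂ _ _ _).trans (by erw [Matrix.det_fin_one])
  have : a ^ k * M.det = (chio M).det * a := by
    rw [← hdetE, ← Matrix.det_mul, hEM, hdetN]
  rw [this, mul_comm]

/-- Extend an embedding `Fin k ↪ Fin n` to `Fin (k+1) ↪ Fin (n+1)` sending last to last. -/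
def extEmb {k n : ℕ} (p : Fin k ↪ Fin n) : Fin (k+1) ↪ Fin (n+1) where
  toFun i := Fin.lastCases (Fin.last n) (fun j => (p j).castSucc) i
  inj' := by
    intro a b h
    induction a using Fin.lastCases with
    | last =>
      induction b using Fin.lastCases with
      | last => rfl
      | cast b =>
        simp only [Fin.lastCases_last, Fin.lastCases_castSucc] at h
        exact absurd h.symm (Fin.castSucc_lt_last _).ne
    | cast a =>
      induction b using Fin.lastCases with
      | last =>
        simp only [Fin.lastCases_last, Fin.lastCases_castSucc] at h
        exact absurd h (Fin.castSucc_lt_last _).ne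
      | cast b =>
        simp only [Fin.lastCases_castSucc] at h
        rw [p.injective (Fin.castSucc_injective _ h)]

@[simp] lemma extEmb_last {k n : ℕ} (p : Fin k ↪ Fin n) :
    extEmb p (Fin.last k) = Fin.last n := by
  show (Fin.lastCases (Fin.last n) (fun j => (p j).castSucc) (Fin.last k) : Fin (n+1)) = _
  simp [extEmb]

@[simp] lemma extEmb_castSucc {k n : ℕ} (p : Fin k ↪ Fin n) (i : Fin k) :
    extEmb p i.castSucc = (p i).castSucc := by
  show (Fin.lastCases (Fin.last n) (fun j => (p j).castSucc) i.castSucc : Fin (n+1)) = _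
  simp [extEmb]

lemma chio_submatrix {k n : ℕ} (L : Matrix (Fin (n+1)) (Fin (n+1)) ℤ)
    (p1 p2 : Fin k ↪ Fin n) :
    (chio L).submatrix p1 p2 = chio (L.submatrix (extEmb p1) (extEmb p2)) := by
  ext i j
  simp [chio]

/-- every embedding hitting the last element is, up to a transposition, an `extEmb`. -/
lemma exists_extEmb {k n : ℕ} (q : Fin (k+1) ↪ Fin (n+1)) (i0 : Fin (k+1))
    (hq : q i0 = Fin.last n) :
    ∃ p : Fin k ↪ Fin n, ∀ i, extEmb p i = q (Equiv.swap i0 (Fin.last k) i) := by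
  set σ := Equiv.swap i0 (Fin.last k) with hσ
  have h1 : q (σ (Fin.last k)) = Fin.last n := by
    rw [hσ, Equiv.swap_apply_right, hq]
  have h2 : ∀ i : Fin k, q (σ i.castSucc) ≠ Fin.last n := by
    intro i hcon
    have : σ i.castSucc = i0 := q.injective (hcon.trans hq.symm)
    have : i.castSucc = σ i0 := by
      rw [← this, hσ]
      simp [Equiv.swap_apply_self]
    rw [hσ, Equiv.swap_apply_left] at this
    exact (Fin.castSucc_lt_last i).ne this
  refine ⟨⟨fun i => (q (σ i.castSucc)).castPred (h2 i), ?_⟩, ?_⟩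
  · intro a b h
    have := Fin.castPred_inj.mp h
    exact Fin.castSucc_injective _ (σ.injective (q.injective this))
  · intro i
    induction i using Fin.lastCases with
    | last => rw [extEmb_last, h1]
    | cast i =>
      rw [extEmb_castSucc]
      exact Fin.castSucc_castPred _ (h2 i)

lemma finset_gcd_nonneg {β : Type*} (s : Finset β) (f : β → ℤ) : 0 ≤ s.gcd f :=
  Int.nonneg_of_normalize_eq_self (Finset.normalize_gcd)

lemma dkstar_eq {k n : ℕ} (L : Matrix (Fin (n+1)) (Fin (n+1)) ℤ) :
    DkStar L (k+1) = Finset.univ.gcd (fun p : (Fin k ↪ Fin n) × (Fin k ↪ Fin n) =>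
      (L.submatrix (extEmb p.1) (extEmb p.2)).det) := by
  unfold DkStar
  apply Int.dvd_antisymm (finset_gcd_nonneg _ _) (finset_gcd_nonneg _ _)
  · refine Finset.dvd_gcd fun p _ => ?_
    exact Finset.gcd_dvd (Finset.mem_filter.mpr ⟨Finset.mem_univ (extEmb p.1, extEmb p.2),
      ⟨Fin.last k, extEmb_last p.1⟩, ⟨Fin.last k, extEmb_last p.2⟩⟩)
  · refine Finset.dvd_gcd fun q hq => ?_
    obtain ⟨-, ⟨i0, hi0⟩, ⟨j0, hj0⟩⟩ := Finset.mem_filter.mp hq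
    obtain ⟨p1, hp1⟩ := exists_extEmb q.1 i0 hi0
    obtain ⟨p2, hp2⟩ := exists_extEmb q.2 j0 hj0
    set σ1 := Equiv.swap i0 (Fin.last k)
    set σ2 := Equiv.swap j0 (Fin.last k)
    have hsub : L.submatrix (extEmb p1) (extEmb p2)
        = ((L.submatrix q.1 q.2).submatrix id σ2).submatrix σ1 id := by
      ext i j
      simp [hp1 i, hp2 j]
    have hdet : (L.submatrix (extEmb p1) (extEmb p2)).det
        = ((σ1.sign * σ2.sign : ℤˣ) : ℤ) * (L.submatrix q.1 q.2).det := by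
      rw [hsub, Matrix.det_permute, Matrix.det_permute']
      push_cast
      ring
    have hu : ((σ1.sign * σ2.sign : ℤˣ) : ℤ) * ((σ1.sign * σ2.sign : ℤˣ) : ℤ) = 1 :=
      by rw [← Units.val_mul, Int.units_mul_self, Units.val_one]
    have hrev : (L.submatrix q.1 q.2).det
        = ((σ1.sign * σ2.sign : ℤˣ) : ℤ) * (L.submatrix (extEmb p1) (extEmb p2)).det := by
      rw [hdet, ← mul_assoc, hu, one_mul]
    rw [hrev]
    exact Dvd.dvd.mul_left (Finset.gcd_dvd (Finset.mem_univ (p1, p2))) _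

/-- for an arithmetical structure `(d, r)` on a connected loopless
multigraph with `n+1` vertices and adjacency matrix `A`, with `L = diag(d) − A` and `L'`
the Keyes–Reiter (Chio) condensation at the last vertex, one has
`D_k(L') = d_n^{k−1} · D_{k+1}*(L)` for all `k ∈ [(n+1)−2]`. -/
theorem stmt8 {n : ℕ} (A : Matrix (Fin (n+1)) (Fin (n+1)) ℤ)
    (d r : Fin (n+1) → ℤ)
    (hAsymm : A.IsSymm) (hAloop : ∀ i, A i i = 0) (hAnonneg : ∀ i j, 0 ≤ A i j)
    (hconn : (SimpleGraph.fromRel fun i j => A i j ≠ 0).Connected)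
    (hd : ∀ i, 0 ≤ d i) (hr : ∀ i, 0 < r i)
    (hrgcd : Finset.univ.gcd r = 1)
    (hstruct : (Matrix.diagonal d - A).mulVec r = 0)
    (k : ℕ) (hk1 : 1 ≤ k) (hk2 : k ≤ n - 1) :
    Dk (chio (Matrix.diagonal d - A)) k
      = d (Fin.last n) ^ (k - 1) * DkStar (Matrix.diagonal d - A) (k + 1) := by
  have hn : 1 ≤ n := by omega
  set L := Matrix.diagonal d - A with hL
  have hLa : L (Fin.last n) (Fin.last n) = d (Fin.last n) := by
    simp [hL, Matrix.sub_apply, hAloop]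
  -- positivity of d at the last vertex
  have hlast0 : (Fin.last n) ≠ (0 : Fin (n+1)) := by
    simp only [ne_eq, Fin.ext_iff, Fin.last, Fin.val_zero]
    omega
  obtain ⟨w⟩ := hconn.preconnected (Fin.last n) 0
  obtain ⟨b, hadj⟩ : ∃ b, (SimpleGraph.fromRel fun i j => A i j ≠ 0).Adj (Fin.last n) b :=
    ⟨w.getVert 1, w.adj_snd (SimpleGraph.Walk.not_nil_of_ne hlast0)⟩
  rw [SimpleGraph.fromRel_adj] at hadj
  obtain ⟨hne, hor⟩ := hadj
  have hAb : 0 < A (Fin.last n) b := by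
    rcases hor with h | h
    · exact lt_of_le_of_ne (hAnonneg _ _) (Ne.symm h)
    · have hsym : A b (Fin.last n) = A (Fin.last n) b := hAsymm.apply _ _
      rw [hsym] at h
      exact lt_of_le_of_ne (hAnonneg _ _) (Ne.symm h)
  have hsum : 0 < ∑ j, A (Fin.last n) j * r j :=
    Finset.sum_pos' (fun j _ => mul_nonneg (hAnonneg _ _) (hr j).le)
      ⟨b, Finset.mem_univ b, mul_pos hAb (hr b)⟩
  have h0 : d (Fin.last n) * r (Fin.last n) = ∑ j, A (Fin.last n) j * r j := by
    have hs := congrFun hstruct (Fin.last n)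
    rw [hL, Matrix.sub_mulVec] at hs
    simp only [Pi.sub_apply, Pi.zero_apply, sub_eq_zero, Matrix.mulVec, dotProduct,
      Matrix.diagonal_apply, ite_mul, zero_mul, Finset.sum_ite_eq, Finset.mem_univ,
      if_true] at hs
    exact hs
  have hdpos : 0 < d (Fin.last n) := by
    rcases (hd (Fin.last n)).lt_or_eq with h | h
    · exact h
    · exfalso
      rw [← h0, ← h, zero_mul] at hsum
      exact lt_irrefl 0 hsum
  -- key determinant identity for each minor
  have hpow : d (Fin.last n) ^ k = d (Fin.last n) * d (Fin.last n) ^ (k - 1) := by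
    rw [← pow_succ', Nat.sub_add_cancel hk1]
  have hdet : ∀ p : (Fin k ↪ Fin n) × (Fin k ↪ Fin n),
      ((chio L).submatrix p.1 p.2).det
        = d (Fin.last n) ^ (k - 1) * (L.submatrix (extEmb p.1) (extEmb p.2)).det := by
    intro p
    have h := chio_mul_det (L.submatrix (extEmb p.1) (extEmb p.2))
    have hentry : (L.submatrix (extEmb p.1) (extEmb p.2)) (Fin.last k) (Fin.last k)
        = d (Fin.last n) := by
      simp [Matrix.submatrix_apply, hLa]
    rw [hentry, hpow, mul_assoc] at h
    rw [chio_submatrix]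
    exact mul_left_cancel₀ (ne_of_gt hdpos) h
  unfold Dk
  rw [Finset.gcd_congr rfl (fun p _ => hdet p), Finset.gcd_mul_left,
    Int.normalize_of_nonneg (pow_nonneg hdpos.le _), dkstar_eq]
end

section
/- With L an n×n symmetric integer matrix of rank n−1 arising from an arithmetical structure, and L' its Chio condensation at (n,n): |K(G'; d', r')| = D_{n−2}(L') divides (g_n(L))²·d_n^{n−3}·D_{n−1}(L) = (g_n(L))²·d_n^{n−3}·|K(G; d, r)|, where g_n(L) is the gcd of the last row of L and d_n = ℓ_{n,n}. -/
open Matrix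

/-- If `a ∣ c * f i` for all `i ∈ s`, then `a ∣ c * s.gcd f`. -/
lemma dvd_mul_finset_gcd {ι : Type*} [DecidableEq ι] (s : Finset ι) (f : ι → ℤ) (a c : ℤ)
    (h : ∀ i ∈ s, a ∣ c * f i) : a ∣ c * s.gcd f := by
  induction s using Finset.induction_on with
  | empty => simp
  | @insert b s' hb ih =>
    rw [Finset.gcd_insert]
    have h1 : a ∣ c * f b := h b (Finset.mem_insert_self _ _)
    have h2 : a ∣ c * s'.gcd f := ih fun i hi => h i (Finset.mem_insert_of_mem hi)
    have h3 : a ∣ gcd (c * f b) (c * s'.gcd f) := dvd_gcd h1 h2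
    rw [gcd_mul_left] at h3
    exact h3.trans (((normalize_associated c).mul_right _).dvd)

lemma Dk_dvd {m' n' k : ℕ} (B : Matrix (Fin m') (Fin n') ℤ) (f : Fin k ↪ Fin m')
    (g : Fin k ↪ Fin n') : Dk B k ∣ (B.submatrix f g).det :=
  Finset.gcd_dvd (Finset.mem_univ (⟨f, g⟩ : (Fin k ↪ Fin m') × (Fin k ↪ Fin n')))

lemma dvd_mul_Dk {m' n' k : ℕ} (B : Matrix (Fin m') (Fin n') ℤ) (a c : ℤ)
    (h : ∀ (f : Fin k ↪ Fin m') (g : Fin k ↪ Fin n'), a ∣ c * (B.submatrix f g).det) :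
    a ∣ c * Dk B k :=
  dvd_mul_finset_gcd _ _ _ _ fun p _ => h p.1 p.2

lemma dvd_of_eq_mul (c : ℤ) {D X Y : ℤ} (h : D ∣ X) (he : Y = c * X) : D ∣ Y :=
  he ▸ h.mul_left c

lemma dvd_mul_flip {a c x y ε : ℤ} (hε : ε * ε = 1) (hxy : x = ε * y) (h : a ∣ c * x) :
    a ∣ c * y := by
  have hy : c * y = ε * (c * x) := by rw [hxy]; linear_combination (-(c*y)) * hε
  rw [hy]; exact h.mul_left ε

lemma eq_mul_flip {ε x y : ℤ} (hε : ε * ε = 1) (h : x = ε * y) : y = ε * x := by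
  rw [h, ← mul_assoc, hε, one_mul]

lemma neg_one_pow_mul_self (s : ℕ) : ((-1:ℤ)^s) * ((-1:ℤ)^s) = 1 := by
  rw [← pow_add]; exact Even.neg_one_pow ⟨s, rfl⟩

lemma castSucc_succAbove_last {k : ℕ} (i : Fin (k+1)) :
    (Fin.castSucc i).succAbove (Fin.last k) = Fin.last (k+1) := by
  rw [Fin.succAbove_of_le_castSucc _ _ (Fin.castSucc_le_castSucc_iff.mpr (Fin.le_last i)),
    Fin.succ_last]

lemma chio_submatrix_s12 {k : ℕ} (L : Matrix (Fin (k+2)) (Fin (k+2)) ℤ) (i j : Fin (k+1)) :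
    (chio L).submatrix i.succAbove j.succAbove
      = chio (L.submatrix (Fin.castSucc i).succAbove (Fin.castSucc j).succAbove) := by
  funext a b
  simp only [Matrix.submatrix_apply, chio, Fin.castSucc_succAbove_castSucc,
    castSucc_succAbove_last]

/-- Chio pivotal condensation. -/
lemma chio_det {k : ℕ} (M : Matrix (Fin (k+1)) (Fin (k+1)) ℤ) :
    (chio M).det * M (Fin.last k) (Fin.last k)
      = M (Fin.last k) (Fin.last k) ^ k * M.det := by
  set p := M (Fin.last k) (Fin.last k) with hp
  set E : Matrix (Fin (k+1)) (Fin (k+1)) ℤ := fun i j =>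
    if i = Fin.last k then (if j = Fin.last k then 1 else 0)
    else (if j = i then p else if j = Fin.last k then -M i (Fin.last k) else 0) with hE
  have hEdet : E.det = p ^ k := by
    have ht : E.BlockTriangular id := by
      intro i j hij
      have h1 : j ≠ i := by exact fun h => absurd (h ▸ hij) (lt_irrefl _)
      have h2 : j ≠ Fin.last k := by
        intro h; exact absurd (h ▸ hij) (not_lt.mpr (Fin.le_last _))
      simp only [hE]
      rw [if_neg h1, if_neg h2]
      split <;> simp [h2]
    rw [Matrix.det_of_upperTriangular ht]
    rw [Fin.prod_univ_castSucc]
    have : ∀ x : Fin k, E (Fin.castSucc x) (Fin.castSucc x) = p := by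
      intro x
      simp only [hE]
      rw [if_neg (Fin.castSucc_lt_last x).ne]
      simp
    rw [Finset.prod_congr rfl fun x _ => this x]
    simp only [hE, if_pos rfl, if_pos rfl]
    simp
  have hEM : ∀ i j, (E * M) i j = if i = Fin.last k then M (Fin.last k) j
      else M i j * p - M i (Fin.last k) * M (Fin.last k) j := by
    intro i j
    rw [Matrix.mul_apply]
    by_cases hi : i = Fin.last k
    · subst hi
      simp only [hE, if_pos rfl]
      rw [Finset.sum_eq_single (Fin.last k)]
      · simp
      · intro b _ hb; rw [if_neg hb, zero_mul]
      · simp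
    · rw [if_neg hi]
      have : ∀ x : Fin (k+1), E i x * M x j
          = (if x = i then p * M x j else 0)
            + (if x = Fin.last k then -M i (Fin.last k) * M x j else 0) := by
        intro x
        simp only [hE, if_neg hi]
        by_cases hx1 : x = i
        · subst hx1; rw [if_pos rfl, if_pos rfl, if_neg hi, add_zero]
        · rw [if_neg hx1, if_neg hx1]
          by_cases hx2 : x = Fin.last k
          · rw [if_pos hx2, if_pos hx2, zero_add]
          · rw [if_neg hx2, if_neg hx2, zero_mul, add_zero]
      rw [Finset.sum_congr rfl fun x _ => this x, Finset.sum_add_distrib,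
        Finset.sum_ite_eq' _ i, Finset.sum_ite_eq' _ (Fin.last k)]
      simp only [Finset.mem_univ, if_pos]
      ring
  have hPdet : (E * M).det = p * (chio M).det := by
    rw [Matrix.det_succ_column (E * M) (Fin.last k)]
    rw [Finset.sum_eq_single (Fin.last k)]
    · rw [hEM]
      rw [if_pos rfl, ← hp]
      have hsub : (E * M).submatrix (Fin.last k).succAbove (Fin.last k).succAbove = chio M := by
        funext a b
        rw [Fin.succAbove_last]
        simp only [Matrix.submatrix_apply]
        rw [hEM, if_neg (Fin.castSucc_lt_last a).ne, chio]
      rw [hsub]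
      have : ((-1 : ℤ)) ^ ((Fin.last k : ℕ) + (Fin.last k : ℕ)) = 1 := by
        rw [← two_mul, pow_mul]; norm_num
      simp only [this, one_mul]
    · intro b _ hb
      rw [hEM, if_neg hb]
      have : M b (Fin.last k) * p - M b (Fin.last k) * M (Fin.last k) (Fin.last k) = 0 := by
        rw [← hp]; ring
      rw [this, mul_zero, zero_mul]
    · simp
  have := hPdet.symm.trans (by rw [Matrix.det_mul, hEdet] : (E * M).det = p ^ k * M.det)
  linarith [this]

lemma embed_decomp {k : ℕ} (f : Fin k ↪ Fin (k+1)) :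
    ∃ (a : Fin (k+1)) (σ : Equiv.Perm (Fin k)), ∀ x, f x = a.succAbove (σ x) := by
  obtain ⟨a, ha⟩ : ∃ a : Fin (k+1), a ∉ Finset.univ.image f := by
    by_contra h
    push_neg at h
    have hsub : (Finset.univ : Finset (Fin (k+1))) ⊆ Finset.univ.image f := fun x _ => h x
    have hc := Finset.card_le_card hsub
    rw [Finset.card_image_of_injective _ f.injective] at hc
    simp [Fintype.card_fin] at hc
  have hfa : ∀ x, f x ≠ a := by
    intro x hx
    exact ha (hx ▸ Finset.mem_image_of_mem f (Finset.mem_univ x))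
  have hg : ∀ x, ∃ y, a.succAbove y = f x := fun x => Fin.exists_succAbove_eq (hfa x)
  choose g hgspec using hg
  have hginj : Function.Injective g := by
    intro x y hxy
    apply f.injective
    rw [← hgspec x, ← hgspec y, hxy]
  refine ⟨a, Equiv.ofBijective g (Finite.injective_iff_bijective.mp hginj), fun x => ?_⟩
  exact (hgspec x).symm

lemma det_submatrix_perm {k : ℕ} (N : Matrix (Fin k) (Fin k) ℤ) (σ τ : Equiv.Perm (Fin k)) :
    (N.submatrix σ τ).det
      = ((((Equiv.Perm.sign σ) : ℤˣ) : ℤ) * (((Equiv.Perm.sign τ) : ℤˣ) : ℤ)) * N.det := by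
  have h1 : N.submatrix σ τ = (N.submatrix id τ).submatrix σ id := rfl
  rw [h1, Matrix.det_permute, Matrix.det_permute']
  push_cast
  ring
/-- for an arithmetical structure `(d, r)` on a connected loopless graph
with `n+1 ≥ 3` vertices and `L = diag(d) − A`, the order `D_{n−1}(L')` of the critical
group after the Keyes–Reiter operation divides
`(g_n(L))² · d_n^{(n+1)−3} · D_{n}(L) = (g_n(L))² · d_n^{(n+1)−3} · |K(G; d, r)|`. -/
theorem stmt12 {n : ℕ} (hn : 2 ≤ n) (A : Matrix (Fin (n+1)) (Fin (n+1)) ℤ)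
    (d r : Fin (n+1) → ℤ)
    (hAsymm : A.IsSymm) (hAloop : ∀ i, A i i = 0) (hAnonneg : ∀ i j, 0 ≤ A i j)
    (hconn : (SimpleGraph.fromRel fun i j => A i j ≠ 0).Connected)
    (hd : ∀ i, 0 ≤ d i) (hr : ∀ i, 0 < r i)
    (hrgcd : Finset.univ.gcd r = 1)
    (hstruct : (Matrix.diagonal d - A).mulVec r = 0) :
    Dk (chio (Matrix.diagonal d - A)) (n - 1)
      ∣ (lastRowGcd (Matrix.diagonal d - A)) ^ 2 * d (Fin.last n) ^ (n - 2)
          * Dk (Matrix.diagonal d - A) n := by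
  obtain ⟨m, rfl⟩ : ∃ m, n = m + 2 := ⟨n - 2, by omega⟩
  clear hn
  set L : Matrix (Fin (m+3)) (Fin (m+3)) ℤ := Matrix.diagonal d - A with hLdef
  set lst : Fin (m+3) := Fin.last (m+2) with hlst
  have hLsymm : L.IsSymm := (Matrix.isSymm_diagonal d).sub hAsymm
  have hLapp : ∀ i j, L j i = L i j := fun i j => hLsymm.apply i j
  have hLentry : ∀ i j, L i j = (if i = j then d i else 0) - A i j := by
    intro i j
    rw [hLdef]
    simp [Matrix.sub_apply, Matrix.diagonal_apply]
  have hLll : L lst lst = d lst := by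
    rw [hLentry, hAloop]; simp
  -- d lst ≠ 0
  have hsum0 : ∀ i, ∑ j, L i j * r j = 0 := by
    intro i
    have := congrFun hstruct i
    simpa [Matrix.mulVec, dotProduct] using this
  have hdne : d lst ≠ 0 := by
    have hsplit : ∑ j, L lst j * r j = d lst * r lst - ∑ j, A lst j * r j := by
      have hterm : ∀ j, L lst j * r j
          = (if lst = j then d lst * r j else 0) - A lst j * r j := by
        intro j; rw [hLentry]; split_ifs with h <;> ring
      rw [Finset.sum_congr rfl fun j _ => hterm j, Finset.sum_sub_distrib,
        Finset.sum_ite_eq Finset.univ lst (fun j => d lst * r j)]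
      simp
    obtain ⟨j0, hj0⟩ : ∃ j0, A lst j0 ≠ 0 := by
      have hvne : lst ≠ (0 : Fin (m+3)) := by
        rw [hlst]; simp [Fin.ext_iff]
      obtain ⟨w⟩ := hconn.preconnected lst 0
      have hadj := w.adj_snd (SimpleGraph.Walk.not_nil_of_ne hvne)
      rw [SimpleGraph.fromRel_adj] at hadj
      obtain ⟨hne, hc⟩ := hadj
      refine ⟨w.getVert 1, ?_⟩
      rcases hc with h | h
      · exact h
      · exact (hAsymm.apply lst (w.getVert 1)) ▸ h
    have h1 : (1:ℤ) ≤ A lst j0 * r j0 := by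
      have hA1 : 1 ≤ A lst j0 := by have := hAnonneg lst j0; omega
      nlinarith [hr j0]
    have h2 : A lst j0 * r j0 ≤ ∑ j, A lst j * r j :=
      Finset.single_le_sum (fun j _ => mul_nonneg (hAnonneg lst j) (hr j).le)
        (Finset.mem_univ j0)
    have h3 := hsum0 lst
    rw [hsplit] at h3
    intro h0
    rw [h0] at h3
    linarith
  -- det L = 0
  have hdet : L.det = 0 := by
    have h1 : L.det • r = 0 := by
      calc L.det • r = (L.det • (1 : Matrix (Fin (m+3)) (Fin (m+3)) ℤ)).mulVec r := by
            rw [Matrix.smul_mulVec, Matrix.one_mulVec]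
        _ = (Matrix.adjugate L * L).mulVec r := by rw [Matrix.adjugate_mul]
        _ = (Matrix.adjugate L).mulVec (L.mulVec r) := by rw [← Matrix.mulVec_mulVec]
        _ = 0 := by rw [hstruct, Matrix.mulVec_zero]
    have h2 := congrFun h1 lst
    simp only [Pi.smul_apply, smul_eq_mul, Pi.zero_apply] at h2
    rcases mul_eq_zero.mp h2 with h | h
    · exact h
    · exact absurd h (hr lst).ne'
  have hmuladj : L * Matrix.adjugate L = 0 := by
    rw [Matrix.mul_adjugate, hdet, zero_smul]
  set C : Fin (m+3) → Fin (m+3) → ℤ := fun i j => Matrix.adjugate L j i with hC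
  have hrel : ∀ kk ii : Fin (m+3), ∑ j, L kk j * C ii j = 0 := by
    intro kk ii
    have := congrFun (congrFun hmuladj kk) ii
    rwa [Matrix.mul_apply, Matrix.zero_apply] at this
  have hadjsymm : (Matrix.adjugate L)ᵀ = Matrix.adjugate L := by
    rw [Matrix.adjugate_transpose, hLsymm]
  have hCsymm : ∀ i j, C i j = C j i := by
    intro i j
    have := congrFun (congrFun hadjsymm j) i
    rw [Matrix.transpose_apply] at this
    exact this.symm
  have hCm : ∀ i j : Fin (m+3),
      C i j = (-1)^((i:ℕ)+(j:ℕ)) * (L.submatrix i.succAbove j.succAbove).det :=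
    fun i j => Matrix.adjugate_fin_succ_eq_det_submatrix L j i
  set e : ℤ := d lst ^ m with he
  set D : ℤ := Dk (chio L) (m+1) with hD
  set g : ℤ := lastRowGcd L with hg
  -- star minors
  have hstar : ∀ i j : Fin (m+2),
      D ∣ e * (L.submatrix (Fin.castSucc i).succAbove (Fin.castSucc j).succAbove).det := by
    intro i j
    have hdvd : D ∣ ((chio L).submatrix i.succAbove j.succAbove).det :=
      Dk_dvd (chio L) (Fin.succAboveEmb i) (Fin.succAboveEmb j)
    rw [chio_submatrix_s12] at hdvd
    set M := L.submatrix (Fin.castSucc i).succAbove (Fin.castSucc j).succAbove with hM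
    have hMll : M (Fin.last (m+1)) (Fin.last (m+1)) = d lst := by
      rw [hM, Matrix.submatrix_apply, castSucc_succAbove_last, castSucc_succAbove_last, ← hlst,
        hLll]
    have hchd := chio_det M
    rw [hMll] at hchd
    have hchd2 : (chio M).det = e * M.det := by
      have hx : (chio M).det * d lst = (e * M.det) * d lst := by
        rw [hchd, he]; ring
      exact mul_right_cancel₀ hdne hx
    rwa [hchd2] at hdvd
  have hstarC : ∀ i j : Fin (m+3), i ≠ lst → j ≠ lst → D ∣ e * C i j := by
    intro i j hi hj
    obtain ⟨i', rfl⟩ := Fin.exists_castSucc_eq.mpr hi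
    obtain ⟨j', rfl⟩ := Fin.exists_castSucc_eq.mpr hj
    exact dvd_mul_flip (neg_one_pow_mul_self _)
      (eq_mul_flip (neg_one_pow_mul_self _) (hCm _ _)) (hstar i' j')
  have hgcol : Finset.univ.gcd (fun k => L k lst) = g := by
    rw [hg]
    show _ = Finset.univ.gcd fun j => L (Fin.last (m+2)) j
    exact congrArg _ (funext fun k => hLapp lst k)
  have hrow : ∀ i : Fin (m+3), i ≠ lst → D ∣ (e * C i lst) * g := by
    intro i hi
    rw [← hgcol]
    apply dvd_mul_finset_gcd
    intro k _
    have hsplit : L k lst * C i lst = -∑ j ∈ Finset.univ.erase lst, L k j * C i j := by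
      have h := hrel k i
      rw [← Finset.add_sum_erase Finset.univ (fun j => L k j * C i j)
        (Finset.mem_univ lst)] at h
      linarith
    have hdvdsum : D ∣ ∑ j ∈ Finset.univ.erase lst, e * -(L k j * C i j) := by
      apply Finset.dvd_sum
      intro j hj
      exact dvd_of_eq_mul (-(L k j)) (hstarC i j hi (Finset.mem_erase.mp hj).1) (by ring)
    have heq : (e * C i lst) * L k lst = ∑ j ∈ Finset.univ.erase lst, e * -(L k j * C i j) := by
      calc (e * C i lst) * L k lst = e * (L k lst * C i lst) := by ring
        _ = e * -∑ j ∈ Finset.univ.erase lst, L k j * C i j := by rw [hsplit]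
        _ = ∑ j ∈ Finset.univ.erase lst, e * -(L k j * C i j) := by
            rw [← Finset.sum_neg_distrib, Finset.mul_sum]
    rw [heq]; exact hdvdsum
  have hcol : ∀ j : Fin (m+3), j ≠ lst → D ∣ (e * C lst j) * g := by
    intro j hj
    have := hrow j hj
    rwa [hCsymm j lst] at this
  have hnn : D ∣ ((e * C lst lst) * g) * g := by
    rw [← hgcol]
    apply dvd_mul_finset_gcd
    intro k _
    rw [hgcol]
    have hsplit : L k lst * C lst lst = -∑ j ∈ Finset.univ.erase lst, L k j * C lst j := by
      have h := hrel k lst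
      rw [← Finset.add_sum_erase Finset.univ (fun j => L k j * C lst j)
        (Finset.mem_univ lst)] at h
      linarith
    have hdvdsum : D ∣ ∑ j ∈ Finset.univ.erase lst, (e * g) * -(L k j * C lst j) := by
      apply Finset.dvd_sum
      intro j hj
      exact dvd_of_eq_mul (-(L k j)) (hcol j (Finset.mem_erase.mp hj).1) (by ring)
    have heq : ((e * C lst lst) * g) * L k lst
        = ∑ j ∈ Finset.univ.erase lst, (e * g) * -(L k j * C lst j) := by
      calc ((e * C lst lst) * g) * L k lst = (e * g) * (L k lst * C lst lst) := by ring
        _ = (e * g) * -∑ j ∈ Finset.univ.erase lst, L k j * C lst j := by rw [hsplit]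
        _ = ∑ j ∈ Finset.univ.erase lst, (e * g) * -(L k j * C lst j) := by
            rw [← Finset.sum_neg_distrib, Finset.mul_sum]
    rw [heq]; exact hdvdsum
  have hall : ∀ a b : Fin (m+3), D ∣ (e * g^2) * C a b := by
    intro a b
    by_cases ha : a = lst <;> by_cases hb : b = lst
    · subst ha; subst hb
      exact dvd_of_eq_mul 1 hnn (by ring)
    · subst ha
      exact dvd_of_eq_mul g (hcol b hb) (by ring)
    · subst hb
      exact dvd_of_eq_mul g (hrow a ha) (by ring)
    · exact dvd_of_eq_mul (g^2) (hstarC a b ha hb) (by ring)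
  have hemb : ∀ p : (Fin (m+2) ↪ Fin (m+3)) × (Fin (m+2) ↪ Fin (m+3)),
      D ∣ (e * g^2) * (L.submatrix p.1 p.2).det := by
    intro p
    obtain ⟨a, σ, hσ⟩ := embed_decomp p.1
    obtain ⟨b, τ, hτ⟩ := embed_decomp p.2
    have hsub : L.submatrix p.1 p.2
        = (L.submatrix a.succAbove b.succAbove).submatrix σ τ := by
      funext x y
      simp only [Matrix.submatrix_apply, hσ x, hτ y]
    set s : ℤ := (((Equiv.Perm.sign σ) : ℤˣ) : ℤ) * (((Equiv.Perm.sign τ) : ℤˣ) : ℤ) with hs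
    have hss : s * s = 1 := by
      rw [hs]
      have hu := Int.units_mul_self (Equiv.Perm.sign σ)
      have hv := Int.units_mul_self (Equiv.Perm.sign τ)
      have hu' : (((Equiv.Perm.sign σ) : ℤˣ) : ℤ) * (((Equiv.Perm.sign σ) : ℤˣ) : ℤ) = 1 := by
        rw [← Units.val_mul, hu, Units.val_one]
      have hv' : (((Equiv.Perm.sign τ) : ℤˣ) : ℤ) * (((Equiv.Perm.sign τ) : ℤˣ) : ℤ) = 1 := by
        rw [← Units.val_mul, hv, Units.val_one]
      nlinarith [hu', hv']
    have hdet1 : (L.submatrix p.1 p.2).det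
        = s * (L.submatrix a.succAbove b.succAbove).det := by
      rw [hsub, det_submatrix_perm, hs]
    have hmab : D ∣ (e * g^2) * (L.submatrix a.succAbove b.succAbove).det :=
      dvd_mul_flip (neg_one_pow_mul_self _) (hCm a b) (hall a b)
    exact dvd_mul_flip hss (eq_mul_flip hss hdet1) hmab
  have hfinal : D ∣ (e * g^2) * Dk L (m+2) :=
    dvd_mul_Dk L D (e * g^2) fun f1 f2 => hemb ⟨f1, f2⟩
  show D ∣ g^2 * d lst ^ m * Dk L (m+2)
  exact dvd_of_eq_mul 1 hfinal (by rw [he]; ring)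
end

section
/- Let L be an n×n symmetric integer matrix (n ≥ 3) and L' its Chio condensation at (n,n), with invariant factors α_k = D_k(L)/D_{k−1}(L) and α'_k = D_k(L')/D_{k−1}(L'). Then α'_1 divides (g_n(L))²·α_1·α_2, where g_n(L) is the gcd of the last row of L. -/
open Matrix

/-! ### Auxiliary lemmas -/

/-- If every power of a prime divides `a`, then `a = 0`. -/
lemma aux_eq_zero_of_forall_pow_dvd {p a : ℤ} (hp : Prime p) (h : ∀ k : ℕ, p ^ k ∣ a) :
    a = 0 := by
  by_contra ha
  have h2 : 2 ≤ p.natAbs := (Int.prime_iff_natAbs_prime.mp hp).two_le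
  have hdvd : p.natAbs ^ a.natAbs ∣ a.natAbs := by
    have := h a.natAbs
    rw [← Int.natAbs_dvd_natAbs, Int.natAbs_pow] at this
    exact this
  have hle : p.natAbs ^ a.natAbs ≤ a.natAbs :=
    Nat.le_of_dvd (Int.natAbs_pos.mpr ha) hdvd
  have : 2 ^ a.natAbs ≤ p.natAbs ^ a.natAbs := Nat.pow_le_pow_left h2 _
  have := Nat.lt_two_pow_self (n := a.natAbs)
  omega

/-- Extraction of the maximal prime power from a nonzero integer. -/
lemma aux_extract {p z : ℤ} (hp : Prime p) (hz : z ≠ 0) :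
    ∃ (k : ℕ) (u : ℤ), ¬ p ∣ u ∧ z = p ^ k * u := by
  have hfin : FiniteMultiplicity p z :=
    Int.finiteMultiplicity_iff.mpr ⟨(Int.prime_iff_natAbs_prime.mp hp).ne_one, hz⟩
  obtain ⟨c, hc, hdvd⟩ := hfin.exists_eq_pow_mul_and_not_dvd
  exact ⟨_, c, hdvd, hc⟩

/-- Divisibility can be checked on prime powers. -/
lemma aux_dvd_of_forall_prime_pow_dvd {a b : ℤ}
    (h : ∀ (q : ℕ) (k : ℕ), q.Prime → (q : ℤ) ^ k ∣ a → (q : ℤ) ^ k ∣ b) : a ∣ b := by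
  rcases eq_or_ne a 0 with rfl | ha
  · have hb : b = 0 := by
      refine aux_eq_zero_of_forall_pow_dvd (p := (2 : ℤ)) Int.prime_two (fun k => ?_)
      have := h 2 k Nat.prime_two (dvd_zero _)
      simpa using this
    simp [hb]
  rcases eq_or_ne b 0 with rfl | hb
  · exact dvd_zero a
  rw [← Int.natAbs_dvd_natAbs]
  rw [← Nat.factorization_le_iff_dvd (Int.natAbs_ne_zero.mpr ha) (Int.natAbs_ne_zero.mpr hb)]
  intro q
  rcases Nat.eq_zero_or_pos (a.natAbs.factorization q) with h0 | hpos
  · simp [h0]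
  have hq : q.Prime := by
    have hmem : q ∈ a.natAbs.factorization.support := Finsupp.mem_support_iff.mpr (by omega)
    rw [Nat.support_factorization] at hmem
    exact Nat.prime_of_mem_primeFactors hmem
  have hdvd_a : q ^ (a.natAbs.factorization q) ∣ a.natAbs := Nat.ordProj_dvd _ _
  have hdvd_a' : (q : ℤ) ^ (a.natAbs.factorization q) ∣ a := by
    rw [← Int.natAbs_dvd_natAbs, Int.natAbs_pow, Int.natAbs_natCast]
    exact hdvd_a
  have hdvd_b := h q _ hq hdvd_a'
  have hdvd_b' : q ^ (a.natAbs.factorization q) ∣ b.natAbs := by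
    rw [← Int.natAbs_dvd_natAbs, Int.natAbs_pow, Int.natAbs_natCast] at hdvd_b
    exact hdvd_b
  exact (Nat.Prime.pow_dvd_iff_le_factorization hq (Int.natAbs_ne_zero.mpr hb)).mp hdvd_b'

/-- The ordered half of the key valuation-theoretic step. -/
lemma aux_lemA {p : ℤ} (hp : Prime p) (e : ℕ) {fn fa fb fc fe ab ae cb ce : ℤ}
    (hab : p ^ e ∣ ab * fn - fa * fb) (hae : p ^ e ∣ ae * fn - fa * fe)
    (hcb : p ^ e ∣ cb * fn - fc * fb) (hce : p ^ e ∣ ce * fn - fc * fe)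
    (hord : ∀ j : ℕ, p ^ j ∣ fc → p ^ j ∣ fa) :
    p ^ e ∣ fn * (ab * ce - ae * cb) := by
  set X : ℤ := fb * ce - fe * cb with hX
  have h1 : p ^ e ∣ fc * X := by
    have hid : fc * X = cb * (ce * fn - fc * fe) - ce * (cb * fn - fc * fb) := by
      rw [hX]; ring
    rw [hid]
    exact dvd_sub (hce.mul_left cb) (hcb.mul_left ce)
  have h2 : p ^ e ∣ fa * X := by
    rcases eq_or_ne fc 0 with h0 | h0
    · have hfa : fa = 0 := by
        refine aux_eq_zero_of_forall_pow_dvd hp (fun k => hord k ?_)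
        rw [h0]; exact dvd_zero _
      rw [hfa, zero_mul]
      exact dvd_zero _
    · obtain ⟨k, w, hw, hkw⟩ := aux_extract hp h0
      have h3 : p ^ e ∣ p ^ k * X := by
        refine hp.pow_dvd_of_dvd_mul_left e hw ?_
        have : fc * X = w * (p ^ k * X) := by rw [hkw]; ring
        rwa [this] at h1
      have h4 : p ^ k ∣ fa := hord k ⟨w, hkw⟩
      obtain ⟨z, hz⟩ := h4
      have : fa * X = z * (p ^ k * X) := by rw [hz]; ring
      rw [this]
      exact h3.mul_left z
  have h5 : p ^ e ∣ fn * (ab * ce - ae * cb) - fa * X := by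
    have hid : fn * (ab * ce - ae * cb) - fa * X
        = ce * (ab * fn - fa * fb) - cb * (ae * fn - fa * fe) := by
      rw [hX]; ring
    rw [hid]
    exact dvd_sub (hab.mul_left ce) (hae.mul_left cb)
  have := dvd_add h5 h2
  simpa using this

/-- Symmetric version of `aux_lemA` (without the ordering hypothesis). -/
lemma aux_claimA {p : ℤ} (hp : Prime p) (e : ℕ) {fn fa fb fc fe ab ae cb ce : ℤ}
    (hab : p ^ e ∣ ab * fn - fa * fb) (hae : p ^ e ∣ ae * fn - fa * fe)
    (hcb : p ^ e ∣ cb * fn - fc * fb) (hce : p ^ e ∣ ce * fn - fc * fe) :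
    p ^ e ∣ fn * (ab * ce - ae * cb) := by
  have htot : (∀ j : ℕ, p ^ j ∣ fc → p ^ j ∣ fa) ∨ (∀ j : ℕ, p ^ j ∣ fa → p ^ j ∣ fc) := by
    by_cases h : ∀ j : ℕ, p ^ j ∣ fc → p ^ j ∣ fa
    · exact Or.inl h
    · right
      push_neg at h
      obtain ⟨j, hjc, hja⟩ := h
      intro i hi
      have hij : i < j := by
        by_contra hlt
        push_neg at hlt
        exact hja ((pow_dvd_pow p hlt).trans hi)
      exact (pow_dvd_pow p hij.le).trans hjc
  rcases htot with h | h
  · exact aux_lemA hp e hab hae hcb hce h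
  · have := aux_lemA hp e hcb hce hab hae h
    have hid : fn * (cb * ae - ce * ab) = -(fn * (ab * ce - ae * cb)) := by ring
    rw [hid, dvd_neg] at this
    exact this

/-- Core arithmetic lemma: per prime power divisibility. -/
lemma aux_core {p : ℤ} (hp : Prime p) (e : ℕ) {fn fa fb fc fe fr fs ab ae cb ce rs : ℤ}
    (hab : p ^ e ∣ ab * fn - fa * fb) (hae : p ^ e ∣ ae * fn - fa * fe)
    (hcb : p ^ e ∣ cb * fn - fc * fb) (hce : p ^ e ∣ ce * fn - fc * fe)
    (hrs : p ^ e ∣ rs * fn - fr * fs) :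
    p ^ e ∣ fr * fs * (ab * ce - ae * cb) := by
  by_cases hfn : p ^ e ∣ fn
  · have h1 : p ^ e ∣ fr * fs := by
      have hid : fr * fs = rs * fn - (rs * fn - fr * fs) := by ring
      rw [hid]
      exact dvd_sub (hfn.mul_left rs) hrs
    exact h1.mul_right _
  · have hfn0 : fn ≠ 0 := by
      rintro rfl
      exact hfn (dvd_zero _)
    obtain ⟨k, u, hu, hk⟩ := aux_extract hp hfn0
    have hke : k ≤ e := by
      by_contra h
      push_neg at h
      exact hfn ((pow_dvd_pow p h.le).trans ⟨u, hk⟩)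
    have hA : p ^ e ∣ fn * (ab * ce - ae * cb) := aux_claimA hp e hab hae hcb hce
    have hM : p ^ (e - k) ∣ (ab * ce - ae * cb) := by
      have h1 : p ^ e ∣ p ^ k * (ab * ce - ae * cb) := by
        refine hp.pow_dvd_of_dvd_mul_left e hu ?_
        have : fn * (ab * ce - ae * cb) = u * (p ^ k * (ab * ce - ae * cb)) := by
          rw [hk]; ring
        rwa [this] at hA
      have h2 : p ^ k * p ^ (e - k) ∣ p ^ k * (ab * ce - ae * cb) := by
        rwa [← pow_add, Nat.add_sub_cancel' hke]
      exact (mul_dvd_mul_iff_left (pow_ne_zero k hp.ne_zero)).mp h2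
    have hrs' : p ^ k ∣ fr * fs := by
      have hid : fr * fs = rs * fn - (rs * fn - fr * fs) := by ring
      rw [hid]
      exact dvd_sub ((Dvd.intro u hk.symm).mul_left rs) ((pow_dvd_pow p hke).trans hrs)
    have := mul_dvd_mul hrs' hM
    rwa [← pow_add, Nat.add_sub_cancel' hke] at this

/-- for a symmetric `(n+1) × (n+1)` integer matrix `L` (with `n+1 ≥ 3`)
and its Chio condensation `L'`, the first invariant factor `α'₁ = D₁(L')` divides
`(g_n(L))² · α₁ · α₂ = (g_n(L))² · D₂(L)`. -/
theorem stmt13 {n : ℕ} (hn : 2 ≤ n) (L : Matrix (Fin (n+1)) (Fin (n+1)) ℤ)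
    (hsymm : L.IsSymm) :
    Dk (chio L) 1 ∣ (lastRowGcd L) ^ 2 * Dk L 2 := by
  set d := Dk (chio L) 1 with hd
  -- d divides every entry of chio L
  have hent : ∀ i j : Fin n, d ∣ chio L i j := by
    intro i j
    have h := Finset.gcd_dvd
      (f := fun p : (Fin 1 ↪ Fin n) × (Fin 1 ↪ Fin n) => ((chio L).submatrix p.1 p.2).det)
      (Finset.mem_univ
      ((⟨fun _ => i, fun a b _ => Subsingleton.elim a b⟩,
        ⟨fun _ => j, fun a b _ => Subsingleton.elim a b⟩) :
        (Fin 1 ↪ Fin n) × (Fin 1 ↪ Fin n)))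
    simp [hd, Dk, Matrix.det_fin_one] at h ⊢
    exact h
  -- the key congruences, for all indices
  have hK : ∀ i j : Fin (n+1), d ∣ L i j * L (Fin.last n) (Fin.last n)
      - L (Fin.last n) i * L (Fin.last n) j := by
    intro i j
    rcases eq_or_ne i (Fin.last n) with rfl | hi
    · have hz : L (Fin.last n) j * L (Fin.last n) (Fin.last n)
          - L (Fin.last n) (Fin.last n) * L (Fin.last n) j = 0 := by ring
      rw [hz]; exact dvd_zero d
    · rcases eq_or_ne j (Fin.last n) with rfl | hj
      · have hsij : L (Fin.last n) i = L i (Fin.last n) := hsymm.apply i (Fin.last n)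
        have hz : L i (Fin.last n) * L (Fin.last n) (Fin.last n)
            - L (Fin.last n) i * L (Fin.last n) (Fin.last n) = 0 := by rw [hsij]; ring
        rw [hz]; exact dvd_zero d
      · obtain ⟨i', rfl⟩ := Fin.exists_castSucc_eq.mpr hi
        obtain ⟨j', rfl⟩ := Fin.exists_castSucc_eq.mpr hj
        have hsi : L (Fin.last n) i'.castSucc = L i'.castSucc (Fin.last n) :=
          hsymm.apply i'.castSucc (Fin.last n)
        have h := hent i' j'
        unfold chio at h
        rwa [hsi]
  -- key divisibility for all pairs and all 2×2 minors
  have key : ∀ (r s : Fin (n+1)) (p : (Fin 2 ↪ Fin (n+1)) × (Fin 2 ↪ Fin (n+1))),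
      d ∣ L (Fin.last n) r * L (Fin.last n) s * (L.submatrix p.1 p.2).det := by
    intro r s p
    rw [Matrix.det_fin_two]
    simp only [Matrix.submatrix_apply]
    apply aux_dvd_of_forall_prime_pow_dvd
    intro q k hq hdvd
    have hqp : Prime (q : ℤ) := Int.prime_iff_natAbs_prime.mpr (by simpa using hq)
    exact aux_core hqp k (hdvd.trans (hK (p.1 0) (p.2 0))) (hdvd.trans (hK (p.1 0) (p.2 1)))
      (hdvd.trans (hK (p.1 1) (p.2 0))) (hdvd.trans (hK (p.1 1) (p.2 1)))
      (hdvd.trans (hK r s))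
  -- assemble the gcds
  have step1 : ∀ r s : Fin (n+1), d ∣ L (Fin.last n) r * L (Fin.last n) s * Dk L 2 := by
    intro r s
    have h : d ∣ Finset.univ.gcd
        (fun p : (Fin 2 ↪ Fin (n+1)) × (Fin 2 ↪ Fin (n+1)) =>
          L (Fin.last n) r * L (Fin.last n) s * (L.submatrix p.1 p.2).det) :=
      Finset.dvd_gcd (fun p _ => key r s p)
    rw [Finset.gcd_mul_left] at h
    refine h.trans (mul_dvd_mul_right ?_ _)
    exact normalize_dvd_iff.mpr dvd_rfl
  have step2 : ∀ r : Fin (n+1), d ∣ L (Fin.last n) r * (lastRowGcd L * Dk L 2) := by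
    intro r
    have h : d ∣ Finset.univ.gcd
        (fun s : Fin (n+1) => L (Fin.last n) s * (L (Fin.last n) r * Dk L 2)) := by
      refine Finset.dvd_gcd (fun s _ => ?_)
      have hid : L (Fin.last n) s * (L (Fin.last n) r * Dk L 2) = L (Fin.last n) r * L (Fin.last n) s * Dk L 2 := by ring
      rw [hid]; exact step1 r s
    rw [Finset.gcd_mul_right] at h
    have h2 : lastRowGcd L * normalize (L (Fin.last n) r * Dk L 2) ∣ L (Fin.last n) r * (lastRowGcd L * Dk L 2) := by
      refine dvd_trans (mul_dvd_mul_left _ (normalize_dvd_iff.mpr dvd_rfl)) (dvd_of_eq (by ring))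
    exact h.trans h2
  have h : d ∣ Finset.univ.gcd
      (fun r : Fin (n+1) => L (Fin.last n) r * (lastRowGcd L * Dk L 2)) :=
    Finset.dvd_gcd (fun r _ => step2 r)
  rw [Finset.gcd_mul_right] at h
  have h2 : lastRowGcd L * normalize (lastRowGcd L * Dk L 2) ∣ lastRowGcd L ^ 2 * Dk L 2 := by
    refine dvd_trans (mul_dvd_mul_left _ (normalize_dvd_iff.mpr dvd_rfl)) (dvd_of_eq (by ring))
  exact h.trans h2
end

section
/- Let L be an n×n symmetric integer matrix (n ≥ 3) and L' its Chio condensation at (n,n). Then α'_1 = D_1(L') divides d_n·α_2, where d_n = ℓ_{n,n} and α_2 = D_2(L)/D_1(L). -/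
open Matrix

/-- gcd of all entries divides each entry. -/
lemma Dk_one_dvd {m k : ℕ} (B : Matrix (Fin m) (Fin k) ℤ) (i : Fin m) (j : Fin k) :
    Dk B 1 ∣ B i j := by
  have h := Finset.gcd_dvd (f := fun p : (Fin 1 ↪ Fin m) × (Fin 1 ↪ Fin k) =>
      (B.submatrix p.1 p.2).det) (Finset.mem_univ
    (⟨⟨fun _ => i, fun a b _ => Subsingleton.elim a b⟩,
      ⟨fun _ => j, fun a b _ => Subsingleton.elim a b⟩⟩ :
        (Fin 1 ↪ Fin m) × (Fin 1 ↪ Fin k)))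
  simp only [Dk, Matrix.det_fin_one] at h ⊢
  exact h

/-- core arithmetic lemma -/
lemma core_s14 (D0 g d w x y z ua ub uc ud qa qb qc qd : ℤ)
    (hw : D0 ∣ w) (hx : D0 ∣ x) (hy : D0 ∣ y) (hz : D0 ∣ z)
    (hqa : D0 ∣ qa) (hqb : D0 ∣ qb) (hqc : D0 ∣ qc) (hqd : D0 ∣ qd)
    (heac : g ∣ d*w - ua*uc) (head : g ∣ d*x - ua*ud)
    (hebc : g ∣ d*y - ub*uc) (hebd : g ∣ d*z - ub*ud)
    (hea : g ∣ d*qa - ua*ua) (heb : g ∣ d*qb - ub*ub)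
    (hec : g ∣ d*qc - uc*uc) (hed : g ∣ d*qd - ud*ud) :
    D0 * g ∣ d * (w*z - x*y) := by
  by_cases hM : d * (w*z - x*y) = 0
  · rw [hM]; exact dvd_zero _
  have hd : d ≠ 0 := fun h => hM (by rw [h, zero_mul])
  by_cases hD0 : D0 = 0
  · exfalso
    rw [hD0, zero_dvd_iff] at hw hx hy hz
    rw [hw, hx, hy, hz] at hM
    simp at hM
  by_cases hg : g = 0
  · exfalso
    rw [hg, zero_dvd_iff, sub_eq_zero] at heac head hebc hebd
    apply hM
    have h2 : d * (d * (w*z - x*y)) = 0 := by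
      have h3 : (d*w) * (d*z) - (d*x) * (d*y) = d * (d * (w*z - x*y)) := by ring
      rw [← h3, heac, head, hebc, hebd]; ring
    exact (mul_eq_zero.mp h2).resolve_left hd
  -- main case
  rw [← Int.natAbs_dvd_natAbs, ← Nat.factorization_le_iff_dvd
      (by simp [Int.natAbs_mul, hD0, hg] : (D0*g).natAbs ≠ 0)
      (Int.natAbs_ne_zero.mpr hM), Finsupp.le_def]
  intro p
  by_cases hp : p.Prime
  swap
  · simp [Nat.factorization_eq_zero_of_not_prime _ hp]
  have hM' : w*z - x*y ≠ 0 := fun h => hM (by rw [h, mul_zero])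
  set α := D0.natAbs.factorization p with hα
  set β := g.natAbs.factorization p with hβ
  set δ := d.natAbs.factorization p with hδ
  have hcast : ∀ (X : ℤ) (k : ℕ), (p:ℕ)^k ∣ X.natAbs → (p:ℤ)^k ∣ X := by
    intro X k hk
    exact_mod_cast dvd_trans (by exact_mod_cast Int.natCast_dvd_natCast.mpr hk)
      (Int.natAbs_dvd.mpr (dvd_refl X))
  have hpD : (p:ℤ)^α ∣ D0 := hcast _ _ (Nat.ordProj_dvd _ _)
  have hpg : (p:ℤ)^β ∣ g := hcast _ _ (Nat.ordProj_dvd _ _)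
  have hpdd : (p:ℤ)^δ ∣ d := hcast _ _ (Nat.ordProj_dvd _ _)
  have lhs_eq : (D0*g).natAbs.factorization p = α + β := by
    rw [Int.natAbs_mul, Nat.factorization_mul (Int.natAbs_ne_zero.mpr hD0)
      (Int.natAbs_ne_zero.mpr hg)]; rfl
  have rhs_eq : (d * (w*z - x*y)).natAbs.factorization p
      = δ + (w*z - x*y).natAbs.factorization p := by
    rw [Int.natAbs_mul, Nat.factorization_mul (Int.natAbs_ne_zero.mpr hd)
      (Int.natAbs_ne_zero.mpr hM')]; rfl
  rw [lhs_eq, rhs_eq]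
  have hval : ∀ (X : ℤ) (k : ℕ), X ≠ 0 → (p:ℤ)^k ∣ X → k ≤ X.natAbs.factorization p := by
    intro X k hX hdvd
    rw [← hp.pow_dvd_iff_le_factorization (Int.natAbs_ne_zero.mpr hX)]
    simpa [Int.natAbs_pow] using Int.natAbs_dvd_natAbs.mpr hdvd
  by_cases hcase : β ≤ α + δ
  · have h2a : (p:ℤ)^(α+α) ∣ w*z - x*y := by
      rw [pow_add]
      exact dvd_sub (mul_dvd_mul (hpD.trans hw) (hpD.trans hz))
        (mul_dvd_mul (hpD.trans hx) (hpD.trans hy))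
    have := hval _ _ hM' h2a
    omega
  · push_neg at hcase
    set t := (α + δ + 1) / 2 with ht
    have h2t : α + δ ≤ 2 * t := by omega
    have key : ∀ u q : ℤ, D0 ∣ q → g ∣ d * q - u * u → (p:ℤ)^t ∣ u := by
      intro u q hDq hgu
      by_cases hu : u = 0
      · rw [hu]; exact dvd_zero _
      have h1 : (p:ℤ)^(α+δ) ∣ u * u := by
        have ha : (p:ℤ)^(α+δ) ∣ d * q := by
          rw [add_comm α δ, pow_add]
          exact mul_dvd_mul hpdd (hpD.trans hDq)
        have hb : (p:ℤ)^(α+δ) ∣ d * q - u*u :=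
          (pow_dvd_pow _ (by omega)).trans (hpg.trans hgu)
        simpa using dvd_sub ha hb
      have hv := hval _ _ (mul_ne_zero hu hu) h1
      have h4 : (u*u).natAbs.factorization p = 2 * u.natAbs.factorization p := by
        rw [Int.natAbs_mul, Nat.factorization_mul (Int.natAbs_ne_zero.mpr hu)
          (Int.natAbs_ne_zero.mpr hu)]
        simp [two_mul]
      rw [h4] at hv
      exact hcast _ _ ((hp.pow_dvd_iff_le_factorization
        (Int.natAbs_ne_zero.mpr hu)).mpr (by omega))
    have hua := key ua qa hqa hea
    have hub := key ub qb hqb heb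
    have huc := key uc qc hqc hec
    have hud := key ud qd hqd hed
    have hid : d * (d * (w*z - x*y)) =
        ua*uc*(d*z - ub*ud) + (ub*ud)*(d*w - ua*uc) + (d*w - ua*uc)*(d*z - ub*ud)
        - ua*ud*(d*y - ub*uc) - (ub*uc)*(d*x - ua*ud) - (d*x - ua*ud)*(d*y - ub*uc) := by
      ring
    have hterm : ∀ A B C : ℤ, (p:ℤ)^t ∣ A → (p:ℤ)^t ∣ B → g ∣ C →
        (p:ℤ)^(α+δ+β) ∣ A*B*C := by
      intro A B C hA hB hC
      refine (pow_dvd_pow (p:ℤ) (show α+δ+β ≤ t+t+β by omega)).trans ?_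
      rw [pow_add, pow_add]
      exact mul_dvd_mul (mul_dvd_mul hA hB) (hpg.trans hC)
    have hterm2 : ∀ C C' : ℤ, g ∣ C → g ∣ C' → (p:ℤ)^(α+δ+β) ∣ C*C' := by
      intro C C' hC hC'
      refine (pow_dvd_pow (p:ℤ) (show α+δ+β ≤ β+β by omega)).trans ?_
      rw [pow_add]
      exact mul_dvd_mul (hpg.trans hC) (hpg.trans hC')
    have hbig : (p:ℤ)^(α+δ+β) ∣ d * (d * (w*z - x*y)) := by
      rw [hid]
      exact dvd_sub (dvd_sub (dvd_sub (dvd_add (dvd_add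
        (hterm _ _ _ hua huc hebd)
        (hterm _ _ _ hub hud heac))
        (hterm2 _ _ heac hebd))
        (hterm _ _ _ hua hud hebc))
        (hterm _ _ _ hub huc head))
        (hterm2 _ _ head hebc)
    have hfin := hval _ _ (mul_ne_zero hd hM) hbig
    rw [Int.natAbs_mul, Nat.factorization_mul (Int.natAbs_ne_zero.mpr hd)
      (Int.natAbs_ne_zero.mpr hM), Finsupp.add_apply, rhs_eq] at hfin
    omega

/-- for a symmetric `(n+1) × (n+1)` integer matrix `L` (with `n+1 ≥ 3`)
and its Chio condensation `L'`, `α'₁ = D₁(L')` divides `d_n · α₂`, where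
`α₂ = D₂(L)/D₁(L)` and `d_n = ℓ_{n,n}`. -/
theorem stmt14 {n : ℕ} (hn : 2 ≤ n) (L : Matrix (Fin (n+1)) (Fin (n+1)) ℤ)
    (hsymm : L.IsSymm) :
    Dk (chio L) 1 ∣ L (Fin.last n) (Fin.last n) * (Dk L 2 / Dk L 1) := by
  set d := L (Fin.last n) (Fin.last n) with hd
  set D1 := Dk L 1 with hD1def
  set g := Dk (chio L) 1 with hgdef
  -- key divisibility: g divides d * L i j - L i n * L j n for all i j
  have hE : ∀ i j : Fin (n+1), g ∣ d * L i j - L i (Fin.last n) * L j (Fin.last n) := by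
    intro i j
    by_cases hi : i = Fin.last n
    · subst hi
      have h0 : d * L (Fin.last n) j - L (Fin.last n) (Fin.last n) * L j (Fin.last n) = 0 := by
        rw [hsymm.apply (Fin.last n) j]; ring
      rw [h0]; exact dvd_zero _
    by_cases hj : j = Fin.last n
    · subst hj
      have h0 : d * L i (Fin.last n) - L i (Fin.last n) * L (Fin.last n) (Fin.last n) = 0 := by
        rw [hd]; ring
      rw [h0]; exact dvd_zero _
    · obtain ⟨i', hi'⟩ : ∃ i' : Fin n, i = i'.castSucc :=
        ⟨⟨i.val, lt_of_le_of_ne (Nat.lt_succ_iff.mp i.isLt) (fun h => hi (Fin.ext h))⟩,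
          Fin.ext rfl⟩
      obtain ⟨j', hj'⟩ : ∃ j' : Fin n, j = j'.castSucc :=
        ⟨⟨j.val, lt_of_le_of_ne (Nat.lt_succ_iff.mp j.isLt) (fun h => hj (Fin.ext h))⟩,
          Fin.ext rfl⟩
      subst hi' hj'
      have h0 : d * L i'.castSucc j'.castSucc
          - L i'.castSucc (Fin.last n) * L j'.castSucc (Fin.last n) = chio L i' j' := by
        show _ = L i'.castSucc j'.castSucc * L (Fin.last n) (Fin.last n)
          - L i'.castSucc (Fin.last n) * L (Fin.last n) j'.castSucc
        rw [hsymm.apply (Fin.last n) j'.castSucc]; ring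
      rw [h0]
      exact Dk_one_dvd (chio L) i' j'
  -- strong claim: D1 * g divides d * M for every 2x2 minor M
  have hstrong : ∀ a b c e : Fin (n+1),
      D1 * g ∣ d * (L a c * L b e - L a e * L b c) := by
    intro a b c e
    exact core_s14 D1 g d (L a c) (L a e) (L b c) (L b e)
      (L a (Fin.last n)) (L b (Fin.last n)) (L c (Fin.last n)) (L e (Fin.last n))
      (L a a) (L b b) (L c c) (L e e)
      (Dk_one_dvd L a c) (Dk_one_dvd L a e) (Dk_one_dvd L b c) (Dk_one_dvd L b e)
      (Dk_one_dvd L a a) (Dk_one_dvd L b b) (Dk_one_dvd L c c) (Dk_one_dvd L e e)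
      (hE a c) (hE a e) (hE b c) (hE b e)
      (hE a a) (hE b b) (hE c c) (hE e e)
  by_cases hD1 : D1 = 0
  · -- all entries vanish, in particular d = 0
    have hzero : d = 0 := by
      have := Dk_one_dvd L (Fin.last n) (Fin.last n)
      rw [← hD1def, hD1, zero_dvd_iff] at this
      exact this
    rw [hzero, zero_mul]
    exact dvd_zero _
  -- D1 divides Dk L 2
  have hD1D2 : D1 ∣ Dk L 2 := by
    refine Finset.dvd_gcd fun p _ => ?_
    rw [Matrix.det_fin_two]
    simp only [Matrix.submatrix_apply]
    exact dvd_sub ((Dk_one_dvd L _ _).mul_right _) ((Dk_one_dvd L _ _).mul_right _)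
  obtain ⟨c, hc⟩ := hD1D2
  have hmain : D1 * g ∣ Finset.univ.gcd
      (fun p : (Fin 2 ↪ Fin (n+1)) × (Fin 2 ↪ Fin (n+1)) =>
        d * (L.submatrix p.1 p.2).det) := by
    refine Finset.dvd_gcd fun p _ => ?_
    rw [Matrix.det_fin_two]
    simp only [Matrix.submatrix_apply]
    exact hstrong _ _ _ _
  rw [Finset.gcd_mul_left] at hmain
  have hdd2 : D1 * g ∣ d * Dk L 2 :=
    hmain.trans (mul_dvd_mul_right (normalize_dvd_iff.mpr dvd_rfl) _)
  rw [hc, Int.mul_ediv_cancel_left _ hD1]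
  have : D1 * g ∣ D1 * (d * c) := by
    have h2 : d * (D1 * c) = D1 * (d * c) := by ring
    rw [hc, h2] at hdd2
    exact hdd2
  exact (mul_dvd_mul_iff_left hD1).mp this
end

section
/- Let L be an n×n symmetric integer matrix (n ≥ 3) and L' its Chio condensation at (n,n). Then α_1·α_2 = D_2(L) divides α'_1 = D_1(L'). -/
open Matrix

/-- for a symmetric `(n+1) × (n+1)` integer matrix `L` (with `n+1 ≥ 3`)
and its Chio condensation `L'`, `α₁ · α₂ = D₂(L)` divides `α'₁ = D₁(L')`. -/
theorem stmt15 {n : ℕ} (hn : 2 ≤ n) (L : Matrix (Fin (n+1)) (Fin (n+1)) ℤ)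
    (hsymm : L.IsSymm) :
    Dk L 2 ∣ Dk (chio L) 1 := by
  apply Finset.dvd_gcd
  intro p _
  have hdet : ((chio L).submatrix p.1 p.2).det = chio L (p.1 0) (p.2 0) := by
    rw [Matrix.det_fin_one]; rfl
  rw [hdet]
  set i := p.1 0
  set j := p.2 0
  have hr : Function.Injective ![i.castSucc, Fin.last n] := by
    intro a b hab
    fin_cases a <;> fin_cases b <;> simp_all [Fin.ext_iff]
    · exact absurd hab (by omega)
    · exact absurd hab (by omega)
  have hc : Function.Injective ![j.castSucc, Fin.last n] := by
    intro a b hab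
    fin_cases a <;> fin_cases b <;> simp_all [Fin.ext_iff]
    · exact absurd hab (by omega)
    · exact absurd hab (by omega)
  have := Finset.gcd_dvd (f := fun p : (Fin 2 ↪ Fin (n+1)) × (Fin 2 ↪ Fin (n+1)) =>
    (L.submatrix p.1 p.2).det)
    (b := (⟨![i.castSucc, Fin.last n], hr⟩, ⟨![j.castSucc, Fin.last n], hc⟩))
    (Finset.mem_univ _)
  convert this using 1
  · rfl
  simp only [Matrix.det_fin_two, Matrix.submatrix_apply]
  simp [chio]
end
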